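/- arXiv:1610.01850 — 7 statements merged into one kernel-verified Lean document; each statement's English description precedes it below -/
import Mathlib

section
/- Let I be an ideal of Π with Π_n ∩ I = 0 and dim(Π_{n+1} ∩ I) = n + 2 (as a real vector space). If h_0, …, h_{n+1} is a vector-space basis of Π_{n+1} ∩ I, then h_0, …, h_{n+1} is an H-basis of the ideal I. -/
open MvPolynomial

noncomputable section

abbrev Pt : Type := Fin 2 → ℝ
abbrev BPoly : Type := MvPolynomial (Fin 2) ℝ

/-- `Π_n`: the space of bivariate polynomials of total degree at most `n`. -/
def PiLE (n : ℕ) : Submodule ℝ BPoly := MvPolynomial.restrictTotalDegree (Fin 2) ℝ n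

/-- The vanishing ideal `I(Y)` of a set `Y ⊆ ℝ²`. -/
def vIdeal (Y : Set Pt) : Ideal BPoly where
  carrier := {p | ∀ y ∈ Y, eval y p = 0}
  add_mem' := by
    intro a b ha hb y hy
    simp [map_add, ha y hy, hb y hy]
  zero_mem' := by intro y hy; simp
  smul_mem' := by
    intro c a ha y hy
    simp [smul_eq_mul, ha y hy]

/-- `I(Y)` as an `ℝ`-subspace of `Π`. -/
def vSub (Y : Set Pt) : Submodule ℝ BPoly := (vIdeal Y).restrictScalars ℝ

/-- `Y` is `Π_n`-poised: every interpolation problem on `Y` has a unique solution in `Π_n`. -/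
def Poised (n : ℕ) (Y : Finset Pt) : Prop :=
  ∀ f : Pt → ℝ, ∃! p : BPoly, p ∈ PiLE n ∧ ∀ y ∈ Y, eval y p = f y

/-- `Y` is `Π_n`-independent: every interpolation problem on `Y` has a solution in `Π_n`. -/
def PIndep (n : ℕ) (Y : Finset Pt) : Prop :=
  ∀ f : Pt → ℝ, ∃ p ∈ PiLE n, ∀ y ∈ Y, eval y p = f y

/-- `ℓ y` is the fundamental (Lagrange) polynomial of `y ∈ Y` in `Π_n`. -/
def IsFundamental (n : ℕ) (Y : Finset Pt) (ℓ : Pt → BPoly) : Prop :=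
  ∀ y ∈ Y, ℓ y ∈ PiLE n ∧ ∀ y' ∈ Y, eval y' (ℓ y) = if y' = y then 1 else 0

/-- A finite family is an H-basis of the ideal `I`. -/
def IsHBasisFam {ι : Type} [Fintype ι] (I : Ideal BPoly) (h : ι → BPoly) : Prop :=
  (∀ i, h i ∈ I) ∧ ∀ f ∈ I, ∃ g : ι → BPoly,
    (∀ i, (g i).totalDegree ≤ f.totalDegree - (h i).totalDegree) ∧ f = ∑ i, g i * h i

/-- A finite set is an H-basis of the ideal `I`. -/
def IsHBasisSet (I : Ideal BPoly) (H : Finset BPoly) : Prop :=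
  (∀ p ∈ H, p ∈ I) ∧ ∀ f ∈ I, ∃ g : BPoly → BPoly,
    (∀ p ∈ H, (g p).totalDegree ≤ f.totalDegree - p.totalDegree) ∧ f = ∑ p ∈ H, g p * p

/-- `M` is a linear syzygy matrix for the family `h`. -/
def IsLinSyz (n : ℕ) (h : Fin (n + 2) → BPoly)
    (M : Matrix (Fin (n + 1)) (Fin (n + 2)) BPoly) : Prop :=
  (∀ i j, M i j ∈ PiLE 1) ∧ ∀ i, ∑ j, M i j * h j = 0

/-- The rank of a polynomial matrix over the field of rational functions. -/
def ratRank {a b : ℕ} (M : Matrix (Fin a) (Fin b) BPoly) : ℕ :=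
  (M.map (algebraMap BPoly (FractionRing BPoly))).rank

/-! ### Auxiliary lemmas -/

lemma deg_eq (m : Fin 2 →₀ ℕ) : m.degree = m 0 + m 1 := by
  rw [Finsupp.degree_apply, Finset.sum_subset (Finset.subset_univ _), Fin.sum_univ_two]
  intro i _ hi; simpa using Finsupp.notMem_support_iff.mp hi

lemma sum_eq_degree (m : Fin 2 →₀ ℕ) : (m.sum fun _ e => e) = m.degree := rfl

lemma tdeg_le_of_coeff {p : BPoly} {k : ℕ}
    (h : ∀ m : Fin 2 →₀ ℕ, k < m.degree → coeff m p = 0) : p.totalDegree ≤ k := by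
  rw [totalDegree]
  apply Finset.sup_le
  intro m hm
  rw [sum_eq_degree]
  by_contra hc
  exact (mem_support_iff.mp hm) (h m (by omega))

lemma coeff_zero_of_lt {p : BPoly} {m : Fin 2 →₀ ℕ} (h : p.totalDegree < m.degree) :
    coeff m p = 0 := by
  apply coeff_eq_zero_of_totalDegree_lt
  rwa [← Finsupp.degree_apply]

lemma tdeg_sub_comp {p : BPoly} {e : ℕ} (hp : p.totalDegree ≤ e) :
    (p - homogeneousComponent e p).totalDegree ≤ e - 1 := by
  apply tdeg_le_of_coeff
  intro m hm
  rw [coeff_sub, coeff_homogeneousComponent]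
  rcases eq_or_ne m.degree e with he | he
  · simp [he]
  · have h2 : e < m.degree := by omega
    rw [if_neg he, sub_zero]
    exact coeff_zero_of_lt (lt_of_le_of_lt hp h2)

/-- The exponent of the `k`-th monomial of degree `n+1` in two variables. -/
def nu (n : ℕ) (k : Fin (n + 2)) : Fin 2 →₀ ℕ :=
  Finsupp.single 0 (k : ℕ) + Finsupp.single 1 (n + 1 - (k : ℕ))

lemma nu_apply0 (n : ℕ) (k : Fin (n + 2)) : nu n k 0 = (k : ℕ) := by
  simp [nu, Finsupp.single_apply]

lemma nu_apply1 (n : ℕ) (k : Fin (n + 2)) : nu n k 1 = n + 1 - (k : ℕ) := by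
  simp [nu, Finsupp.single_apply]

lemma nu_degree (n : ℕ) (k : Fin (n + 2)) : (nu n k).degree = n + 1 := by
  have := k.isLt
  rw [deg_eq, nu_apply0, nu_apply1]
  omega

lemma nu_inj (n : ℕ) : Function.Injective (nu n) := by
  intro a b hab
  have := congrArg (fun m : Fin 2 →₀ ℕ => m 0) hab
  simp only [nu_apply0] at this
  exact Fin.ext this

lemma finsupp_fin2_ext {a b : Fin 2 →₀ ℕ} (ha : a 0 = b 0) (hb : a 1 = b 1) : a = b := by
  ext i
  fin_cases i
  · exact ha
  · exact hb

lemma eq_nu {n : ℕ} {m : Fin 2 →₀ ℕ} (hm : m.degree = n + 1) : ∃ k : Fin (n + 2), m = nu n k := by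
  have h01 : m 0 + m 1 = n + 1 := by rw [← deg_eq]; exact hm
  refine ⟨⟨m 0, by omega⟩, ?_⟩
  refine finsupp_fin2_ext ?_ ?_
  · rw [nu_apply0]
  · rw [nu_apply1]; simp; omega

lemma split_monomial {n d : ℕ} (hd : n + 1 ≤ d) {m : Fin 2 →₀ ℕ} (hm : m.degree = d) :
    ∃ (k : Fin (n + 2)) (m1 : Fin 2 →₀ ℕ), m1.degree = d - (n + 1) ∧ m = m1 + nu n k := by
  have h01 : m 0 + m 1 = d := by rw [← deg_eq]; exact hm
  have hak : min (m 0) (n + 1) < n + 2 := by omega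
  set k : Fin (n + 2) := ⟨min (m 0) (n + 1), hak⟩ with hk
  have hk0 : (k : ℕ) = min (m 0) (n + 1) := rfl
  have hle : nu n k ≤ m := by
    rw [Finsupp.le_def]
    intro i
    fin_cases i
    · show nu n k 0 ≤ m 0
      rw [nu_apply0, hk0]; omega
    · show nu n k 1 ≤ m 1
      rw [nu_apply1, hk0]; omega
  refine ⟨k, m - nu n k, ?_, (tsub_add_cancel_of_le hle).symm⟩
  rw [deg_eq]
  simp only [Finsupp.tsub_apply, nu_apply0, nu_apply1, hk0]
  omega

/-- If `Π_n ∩ I = 0` and `dim (Π_{n+1} ∩ I) = n+2`, then any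
vector-space basis `h_0, …, h_{n+1}` of `Π_{n+1} ∩ I` is an H-basis of `I`. -/
theorem stmt2 (n : ℕ) (I : Ideal BPoly)
    (h0 : PiLE n ⊓ I.restrictScalars ℝ = ⊥)
    (h1 : Module.finrank ℝ ↥(PiLE (n + 1) ⊓ I.restrictScalars ℝ) = n + 2)
    (h : Fin (n + 2) → BPoly)
    (hmem : ∀ i, h i ∈ PiLE (n + 1) ⊓ I.restrictScalars ℝ)
    (hind : LinearIndependent ℝ h)
    (hspan : Submodule.span ℝ (Set.range h) = PiLE (n + 1) ⊓ I.restrictScalars ℝ) :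
    IsHBasisFam I h := by
  classical
  have hmemI : ∀ i, h i ∈ I := fun i => (hmem i).2
  have hdegle : ∀ i, (h i).totalDegree ≤ n + 1 := fun i =>
    (mem_restrictTotalDegree _ _ _).mp (hmem i).1
  set L : Fin (n + 2) → BPoly := fun i => homogeneousComponent (n + 1) (h i) with hL
  -- anything in I of degree ≤ n is zero
  have hbot : ∀ p : BPoly, p.totalDegree ≤ n → p ∈ I → p = 0 := by
    intro p hpn hpI
    have hp : p ∈ PiLE n ⊓ I.restrictScalars ℝ :=
      Submodule.mem_inf.mpr ⟨(mem_restrictTotalDegree _ _ _).mpr hpn, hpI⟩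
    rw [h0] at hp
    simpa using hp
  have hsub : ∀ i, (h i - L i).totalDegree ≤ n := fun i => by
    simpa using tdeg_sub_comp (hdegle i)
  -- leading forms are linearly independent
  have hindL : LinearIndependent ℝ L := by
    rw [Fintype.linearIndependent_iff]
    intro c hc
    set p : BPoly := ∑ i, c i • h i with hp
    have hpI : p ∈ I := Submodule.sum_mem _ fun i _ => Submodule.smul_mem _ _ (hmem i).2
    have hLp : homogeneousComponent (n + 1) p = 0 := by
      rw [hp, map_sum]
      simp only [map_smul]
      exact hc
    have hdp : p.totalDegree ≤ n + 1 := by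
      refine le_trans (totalDegree_finset_sum _ _) (Finset.sup_le fun i _ => ?_)
      exact le_trans (totalDegree_smul_le _ _) (hdegle i)
    have hdn : p.totalDegree ≤ n := by
      apply tdeg_le_of_coeff
      intro m hm
      rcases eq_or_ne m.degree (n + 1) with he | he
      · have := coeff_homogeneousComponent (n := n + 1) (φ := p) m
        rw [if_pos he, hLp] at this
        simpa using this.symm
      · exact coeff_zero_of_lt (by omega)
    have hp0 : p = 0 := hbot p hdn hpI
    exact Fintype.linearIndependent_iff.mp hind c (by rw [← hp, hp0])
  -- degrees are exactly n+1
  have hdeg : ∀ i, (h i).totalDegree = n + 1 := by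
    intro i
    refine le_antisymm (hdegle i) ?_
    by_contra hlt
    push_neg at hlt
    exact hind.ne_zero i (hbot (h i) (by omega) (hmemI i))
  -- monomials of degree n+1
  set μ : Fin (n + 2) → BPoly := fun k => monomial (nu n k) 1 with hμ
  have hindμ : LinearIndependent ℝ μ := by
    have hb := (basisMonomials (Fin 2) ℝ).linearIndependent.comp (nu n) (nu_inj n)
    rw [coe_basisMonomials] at hb
    exact hb
  have hLW : ∀ i, L i ∈ Submodule.span ℝ (Set.range μ) := by
    intro i
    rw [(L i).as_sum]
    apply Submodule.sum_mem
    intro m hm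
    have hmd : m.degree = n + 1 := by
      by_contra hc
      exact (mem_support_iff.mp hm)
        ((homogeneousComponent_isHomogeneous (n + 1) (h i)).coeff_eq_zero hc)
    obtain ⟨k, hk⟩ := eq_nu hmd
    have : monomial m (coeff m (L i)) = (coeff m (L i)) • μ k := by
      rw [hk, hμ]
      simp [smul_monomial]
    rw [this]
    exact Submodule.smul_mem _ _ (Submodule.subset_span ⟨k, rfl⟩)
  have hspanL : Submodule.span ℝ (Set.range L) = Submodule.span ℝ (Set.range μ) := by
    haveI : FiniteDimensional ℝ (Submodule.span ℝ (Set.range μ)) :=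
      FiniteDimensional.span_of_finite ℝ (Set.finite_range μ)
    apply Submodule.eq_of_le_of_finrank_le
    · rw [Submodule.span_le]
      rintro x ⟨i, rfl⟩
      exact hLW i
    · rw [finrank_span_eq_card hindμ, finrank_span_eq_card hindL]
  have hμspan : ∀ k, ∃ c : Fin (n + 2) → ℝ, ∑ i, c i • L i = μ k := by
    intro k
    apply (Submodule.mem_span_range_iff_exists_fun ℝ).mp
    rw [hspanL]
    exact Submodule.subset_span ⟨k, rfl⟩
  -- main induction
  have main : ∀ d : ℕ, ∀ f ∈ I, f.totalDegree ≤ d → ∃ g : Fin (n + 2) → BPoly,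
      (∀ i, (g i).totalDegree ≤ f.totalDegree - (n + 1)) ∧ f = ∑ i, g i * h i := by
    intro d
    induction d with
    | zero =>
      intro f hf hdf
      have hf0 : f = 0 := hbot f (le_trans hdf (Nat.zero_le n)) hf
      exact ⟨0, fun i => by simp, by simp [hf0]⟩
    | succ d ih =>
      intro f hfI hdf
      by_cases hfd : f.totalDegree ≤ d
      · exact ih f hfI hfd
      by_cases hfn : f.totalDegree ≤ n
      · have hf0 : f = 0 := hbot f hfn hfI
        exact ⟨0, fun i => by simp, by simp [hf0]⟩
      push_neg at hfd hfn
      have hdeq : f.totalDegree = d + 1 := by omega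
      have hnd : n + 1 ≤ d + 1 := by omega
      set F : BPoly := homogeneousComponent (d + 1) f with hF
      -- the leading form of f is a combination with small coefficients
      let T : Submodule ℝ BPoly :=
        { carrier := {p | ∃ q : Fin (n + 2) → BPoly,
            (∀ i, (q i).totalDegree ≤ d - n) ∧ p = ∑ i, q i * L i}
          add_mem' := by
            rintro a b ⟨qa, ha1, rfl⟩ ⟨qb, hb1, rfl⟩
            refine ⟨qa + qb, fun i => ?_, ?_⟩
            · exact le_trans (totalDegree_add _ _) (max_le (ha1 i) (hb1 i))
            · rw [← Finset.sum_add_distrib]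
              exact Finset.sum_congr rfl fun i _ => by simp [add_mul]
          zero_mem' := ⟨0, by simp, by simp⟩
          smul_mem' := by
            rintro c a ⟨q, h1, rfl⟩
            refine ⟨c • q, fun i => le_trans (totalDegree_smul_le _ _) (h1 i), ?_⟩
            rw [Finset.smul_sum]
            exact Finset.sum_congr rfl fun i _ => by simp [smul_mul_assoc] }
      have hFT : F ∈ T := by
        rw [F.as_sum]
        apply Submodule.sum_mem
        intro m hm
        have hmd : m.degree = d + 1 := by
          by_contra hc
          exact (mem_support_iff.mp hm)
            ((homogeneousComponent_isHomogeneous (d + 1) f).coeff_eq_zero hc)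
        obtain ⟨k, m1, hm1deg, hmsplit⟩ := split_monomial hnd hmd
        obtain ⟨c, hc⟩ := hμspan k
        refine ⟨fun i => c i • monomial m1 (coeff m F), fun i => ?_, ?_⟩
        · refine le_trans (totalDegree_smul_le _ _) (le_trans (totalDegree_monomial_le _ _) ?_)
          have hgoal : m1.degree ≤ d - n := by omega
          exact hgoal
        · have hmono : monomial m (coeff m F) = monomial m1 (coeff m F) * μ k := by
            rw [hμ, hmsplit, monomial_mul, mul_one]
          rw [hmono, ← hc, Finset.mul_sum]
          exact Finset.sum_congr rfl fun i _ => by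
            rw [mul_smul_comm, smul_mul_assoc]
      obtain ⟨q, hq1, hq2⟩ := hFT
      set f' : BPoly := f - ∑ i, q i * h i with hf'
      have hf'I : f' ∈ I :=
        I.sub_mem hfI (Ideal.sum_mem I fun i _ => I.mul_mem_left _ (hmemI i))
      have hf'deg : f'.totalDegree ≤ d := by
        have hsum : ∑ i, q i * h i = (∑ i, q i * L i) + ∑ i, q i * (h i - L i) := by
          rw [← Finset.sum_add_distrib]
          exact Finset.sum_congr rfl fun i _ => by ring
        have heq : f' = (f - F) - ∑ i, q i * (h i - L i) := by
          rw [hf', hsum, ← hq2]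
          ring
        rw [heq]
        refine le_trans (totalDegree_sub _ _) (max_le ?_ ?_)
        · have := tdeg_sub_comp (p := f) (e := d + 1) (by omega)
          simpa using this
        · refine le_trans (totalDegree_finset_sum _ _) (Finset.sup_le fun i _ => ?_)
          refine le_trans (totalDegree_mul _ _) ?_
          have h1 := hq1 i
          have h2 := hsub i
          omega
      obtain ⟨g', hg1, hg2⟩ := ih f' hf'I hf'deg
      refine ⟨fun i => q i + g' i, fun i => ?_, ?_⟩
      · rw [hdeq]
        refine le_trans (totalDegree_add _ _) (max_le ?_ ?_)
        · have := hq1 i; omega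
        · have h1 := hg1 i
          have h2 : f'.totalDegree ≤ d := hf'deg
          omega
      · have hfe : f = f' + ∑ i, q i * h i := by rw [hf']; ring
        rw [hfe, hg2, ← Finset.sum_add_distrib]
        exact Finset.sum_congr rfl fun i _ => by ring
  refine ⟨hmemI, ?_⟩
  intro f hf
  obtain ⟨g, hg1, hg2⟩ := main f.totalDegree f hf le_rfl
  exact ⟨g, fun i => by rw [hdeg i]; exact hg1 i, hg2⟩
end
end

section
/- Let I be an ideal of Π with Π_n ∩ I = 0 and dim(Π_{n+1} ∩ I) = n + 2 (as a real vector space). If h_0, …, h_{n+1} ∈ I form an H-basis of I, then h_0, …, h_{n+1} form a vector-space basis of Π_{n+1} ∩ I. -/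
open MvPolynomial

noncomputable section

lemma eq_C_of_totalDegree_eq_zero {p : BPoly} (hp : p.totalDegree = 0) :
    p = C (p.coeff 0) := by
  ext m
  by_cases hm : m = 0
  · simp [hm]
  · rw [MvPolynomial.coeff_C, if_neg (Ne.symm hm)]
    by_contra hc
    have hms : m ∈ p.support := by simpa [MvPolynomial.mem_support_iff] using hc
    have := (MvPolynomial.totalDegree_eq_zero_iff _ p).1 hp m hms
    exact hm (Finsupp.ext fun i => this i)

/-- If `Π_n ∩ I = 0`, `dim (Π_{n+1} ∩ I) = n+2`, and
`h_0, …, h_{n+1} ∈ I` form an H-basis of `I`, then they form a vector-space basis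
of `Π_{n+1} ∩ I`. -/
theorem stmt3 (n : ℕ) (I : Ideal BPoly)
    (h0 : PiLE n ⊓ I.restrictScalars ℝ = ⊥)
    (h1 : Module.finrank ℝ ↥(PiLE (n + 1) ⊓ I.restrictScalars ℝ) = n + 2)
    (h : Fin (n + 2) → BPoly)
    (hmem : ∀ i, h i ∈ I)
    (hHB : IsHBasisFam I h) :
    (∀ i, h i ∈ PiLE (n + 1) ⊓ I.restrictScalars ℝ) ∧
    LinearIndependent ℝ h ∧
    Submodule.span ℝ (Set.range h) = PiLE (n + 1) ⊓ I.restrictScalars ℝ := by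
  classical
  set S := PiLE (n + 1) ⊓ I.restrictScalars ℝ with hSdef
  set W := Submodule.span ℝ (Set.range h) with hWdef
  have hdeg : ∀ i : Fin (n + 2), h i ≠ 0 → n + 1 ≤ (h i).totalDegree := by
    intro i hne
    by_contra hlt
    push_neg at hlt
    have hmem' : h i ∈ PiLE n ⊓ I.restrictScalars ℝ :=
      ⟨(MvPolynomial.mem_restrictTotalDegree _ _ _).2 (by omega), hmem i⟩
    rw [h0] at hmem'
    exact hne (by simpa using hmem')
  have hSW : S ≤ W := by
    intro f hf
    obtain ⟨hf1, hf2⟩ := hf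
    by_cases hf0 : f = 0
    · simp [hf0]
    obtain ⟨g, hg1, hg2⟩ := hHB.2 f hf2
    have hdf : f.totalDegree ≤ n + 1 := (MvPolynomial.mem_restrictTotalDegree _ _ _).1 hf1
    have : f = ∑ i, (if h i = 0 then 0 else (g i).coeff 0) • h i := by
      rw [hg2]
      refine Finset.sum_congr rfl fun i _ => ?_
      by_cases hi : h i = 0
      · simp [hi]
      · have hdi := hdeg i hi
        have hgi := hg1 i
        have hg0 : (g i).totalDegree = 0 := by omega
        rw [if_neg hi, MvPolynomial.smul_eq_C_mul, ← eq_C_of_totalDegree_eq_zero hg0]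
    rw [this]
    exact Submodule.sum_smul_mem _ _ fun i _ => Submodule.subset_span ⟨i, rfl⟩
  have hWfin : FiniteDimensional ℝ W := FiniteDimensional.span_of_finite ℝ (Set.finite_range h)
  have hWle : Module.finrank ℝ W ≤ n + 2 := by
    exact (by simpa using finrank_range_le_card h : Set.finrank ℝ (Set.range h) ≤ n + 2)
  have hSeq : S = W := by
    refine Submodule.eq_of_le_of_finrank_le hSW ?_
    rw [h1]; exact hWle
  have hWrank : Module.finrank ℝ W = n + 2 := by rw [← hSeq, h1]
  refine ⟨fun i => ?_, ?_, hSeq.symm⟩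
  · rw [hSeq]; exact Submodule.subset_span ⟨i, rfl⟩
  · rw [linearIndependent_iff_card_eq_finrank_span]
    rw [Set.finrank, ← hWdef, hWrank, Fintype.card_fin]
end
end

section
/- For any ideal I of Π and any n ∈ ℕ, the two conditions Π_n ∩ I = 0 and dim(Π_{n+1} ∩ I) = n + 2 hold simultaneously if and only if Π = Π_n ⊕ I (i.e., Π_n ∩ I = 0 and Π_n + I = Π). -/
open MvPolynomial

noncomputable section

section Aux

open Finsupp

lemma sumdeg_eq (d : Fin 2 →₀ ℕ) : (d.sum fun _ e => e) = d 0 + d 1 := by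
  rw [Finsupp.sum_fintype _ _ fun _ => rfl, Fin.sum_univ_two]

/-- The set of exponents of total degree exactly `m`. -/
def exactSet (m : ℕ) : Set (Fin 2 →₀ ℕ) := {d | d 0 + d 1 = m}

def exactEquiv (m : ℕ) : exactSet m ≃ Fin (m + 1) where
  toFun d := ⟨d.1 0, by have := d.2; simp only [exactSet, Set.mem_setOf_eq] at this; omega⟩
  invFun i := ⟨Finsupp.single 0 i.1 + Finsupp.single 1 (m - i.1), by
    have := i.2
    simp only [exactSet, Set.mem_setOf_eq, Finsupp.add_apply, Finsupp.single_apply]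
    norm_num
    omega⟩
  left_inv d := Subtype.ext (Finsupp.ext fun a => by
    have hd := d.2
    simp only [exactSet, Set.mem_setOf_eq] at hd
    fin_cases a <;>
      simp only [Finsupp.add_apply, Finsupp.single_apply] <;> norm_num <;> omega)
  right_inv i := by
    apply Fin.ext
    simp [Finsupp.single_apply]

lemma finrank_exact (m : ℕ) :
    Module.finrank ℝ (restrictSupport ℝ (exactSet m) : Submodule ℝ BPoly) = m + 1 := by
  haveI : Fintype (exactSet m) := Fintype.ofEquiv _ (exactEquiv m).symm
  rw [Module.finrank_eq_card_basis (basisRestrictSupport ℝ _),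
    Fintype.card_congr (exactEquiv m), Fintype.card_fin]

lemma piLE_mono {a b : ℕ} (h : a ≤ b) : PiLE a ≤ PiLE b :=
  restrictSupport_mono (R := ℝ) fun d hd => le_trans hd h

lemma piLE_succ_sup (m : ℕ) :
    PiLE m ⊔ restrictSupport ℝ (exactSet (m + 1)) = PiLE (m + 1) := by
  show restrictSupport ℝ _ ⊔ restrictSupport ℝ _ = restrictSupport (σ := Fin 2) ℝ _
  rw [restrictSupport_eq_span, restrictSupport_eq_span, restrictSupport_eq_span,
    ← Submodule.span_union, ← Set.image_union]
  congr 2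
  ext d
  simp only [Set.mem_union, Set.mem_setOf_eq, exactSet, sumdeg_eq]
  omega

lemma piLE_inf_exact (m : ℕ) :
    Disjoint (PiLE m) (restrictSupport ℝ (exactSet (m + 1))) := by
  rw [Submodule.disjoint_def]
  intro p hp hq
  have hp' : ↑p.support ⊆ {d : Fin 2 →₀ ℕ | (d.sum fun _ e => e) ≤ m} := hp
  have hq' : ↑p.support ⊆ exactSet (m + 1) := hq
  rw [← MvPolynomial.support_eq_empty, Finset.eq_empty_iff_forall_notMem]
  intro d hd
  have h1 := hp' hd
  have h2 := hq' hd
  simp only [Set.mem_setOf_eq, exactSet, sumdeg_eq] at h1 h2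
  omega

lemma finrank_piLE_succ (m : ℕ) :
    Module.finrank ℝ (PiLE (m + 1)) = Module.finrank ℝ (PiLE m) + (m + 2) := by
  haveI : Fintype (exactSet (m + 1)) := Fintype.ofEquiv _ (exactEquiv (m + 1)).symm
  haveI : FiniteDimensional ℝ (restrictSupport ℝ (exactSet (m + 1)) : Submodule ℝ BPoly) :=
    Module.Finite.of_basis (basisRestrictSupport ℝ _)
  haveI : FiniteDimensional ℝ (PiLE m) :=
    inferInstanceAs (Module.Finite ℝ (restrictTotalDegree (Fin 2) ℝ m))
  have h := Submodule.finrank_sup_add_finrank_inf_eq (PiLE m)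
    (restrictSupport ℝ (exactSet (m + 1)))
  rw [piLE_succ_sup, (piLE_inf_exact m).eq_bot, finrank_bot, finrank_exact] at h
  omega

lemma top_of_piLE_succ_le (n : ℕ) (I : Ideal BPoly)
    (h : PiLE (n + 1) ≤ PiLE n ⊔ I.restrictScalars ℝ) :
    PiLE n ⊔ I.restrictScalars ℝ = ⊤ := by
  set T := PiLE n ⊔ I.restrictScalars ℝ with hT
  -- closure of T under multiplication by variables
  have hX : ∀ (i : Fin 2) (p : BPoly), p ∈ T → X i * p ∈ T := by
    intro i p hp
    rw [hT, Submodule.mem_sup] at hp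
    obtain ⟨r, hr, f, hf, rfl⟩ := hp
    rw [mul_add]
    apply Submodule.add_mem
    · apply h
      refine (MvPolynomial.mem_restrictTotalDegree _ _ _).mpr ?_
      calc (X i * r).totalDegree ≤ (X i : BPoly).totalDegree + r.totalDegree :=
            totalDegree_mul _ _
        _ ≤ 1 + n := by
            have hr' : r.totalDegree ≤ n := (MvPolynomial.mem_restrictTotalDegree _ _ _).mp hr
            have := MvPolynomial.totalDegree_X (R := ℝ) i
            omega
        _ = n + 1 := by omega
    · exact Submodule.mem_sup_right (I.mul_mem_left (X i) hf)
  -- every monomial is in T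
  have hmono : ∀ (m : ℕ) (d : Fin 2 →₀ ℕ),
      (d.sum fun _ e => e) ≤ m → (MvPolynomial.monomial d (1 : ℝ)) ∈ T := by
    intro m
    induction m with
    | zero =>
      intro d hd
      apply h
      refine (MvPolynomial.mem_restrictTotalDegree _ _ _).mpr ?_
      rw [MvPolynomial.totalDegree_monomial _ one_ne_zero]
      omega
    | succ m ih =>
      intro d hd
      rcases Nat.lt_or_ge m (n + 1) with hm | hm
      · apply h
        refine (MvPolynomial.mem_restrictTotalDegree _ _ _).mpr ?_
        rw [MvPolynomial.totalDegree_monomial _ one_ne_zero]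
        omega
      · rcases le_or_gt (d.sum fun _ e => e) m with h' | h'
        · exact ih d h'
        · have hdeg : d 0 + d 1 = m + 1 := by
            rw [← sumdeg_eq]; omega
          have hex : ∃ i : Fin 2, d i ≠ 0 := by
            by_contra hc
            push_neg at hc
            have h0 := hc 0
            have h1 := hc 1
            omega
          obtain ⟨i, hi⟩ := hex
          set d' := d - Finsupp.single i 1 with hd'
          have happ : ∀ a, d' a = d a - (Finsupp.single i 1 : Fin 2 →₀ ℕ) a := by
            intro a; rw [hd', Finsupp.tsub_apply]
          have hs01 : (Finsupp.single i 1 : Fin 2 →₀ ℕ) 0 + (Finsupp.single i 1 : Fin 2 →₀ ℕ) 1 = 1 := by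
            fin_cases i <;> simp
          have hsle : ∀ a, (Finsupp.single i 1 : Fin 2 →₀ ℕ) a ≤ d a := by
            intro a
            rw [Finsupp.single_apply]
            split
            · next hia => subst hia; omega
            · omega
          have hsum' : d' 0 + d' 1 = m := by
            have e0 := happ 0
            have e1 := happ 1
            have l0 := hsle 0
            have l1 := hsle 1
            omega
          have hdsum : (d'.sum fun _ e => e) ≤ m := by rw [sumdeg_eq]; omega
          have hdd : Finsupp.single i 1 + d' = d := by
            ext a
            rw [Finsupp.add_apply, happ a, Finsupp.single_apply]
            split
            · next hia => subst hia; omega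
            · omega
          have := hX i _ (ih d' hdsum)
          rwa [MvPolynomial.X, MvPolynomial.monomial_mul, one_mul, hdd] at this
  -- conclude
  rw [eq_top_iff]
  intro p _
  have hle : PiLE p.totalDegree ≤ T := by
    show restrictSupport ℝ _ ≤ T
    rw [restrictSupport_eq_span, Submodule.span_le]
    rintro q ⟨d, hd, rfl⟩
    exact hmono p.totalDegree d hd
  exact hle ((MvPolynomial.mem_restrictTotalDegree _ _ _).mpr le_rfl)

end Aux

/-- For any ideal `I` of `Π` and any `n`, the conditions
`Π_n ∩ I = 0` and `dim (Π_{n+1} ∩ I) = n+2` hold simultaneously iff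
`Π = Π_n ⊕ I`, i.e. `Π_n ∩ I = 0` and `Π_n + I = Π`. -/
theorem stmt4 (n : ℕ) (I : Ideal BPoly) :
    (PiLE n ⊓ I.restrictScalars ℝ = ⊥ ∧
      Module.finrank ℝ ↥(PiLE (n + 1) ⊓ I.restrictScalars ℝ) = n + 2) ↔
    (PiLE n ⊓ I.restrictScalars ℝ = ⊥ ∧
      PiLE n ⊔ I.restrictScalars ℝ = ⊤) := by
  haveI : FiniteDimensional ℝ (PiLE (n + 1)) :=
    inferInstanceAs (Module.Finite ℝ (restrictTotalDegree (Fin 2) ℝ (n + 1)))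
  haveI : FiniteDimensional ℝ (PiLE n) :=
    inferInstanceAs (Module.Finite ℝ (restrictTotalDegree (Fin 2) ℝ n))
  set J := PiLE (n + 1) ⊓ I.restrictScalars ℝ with hJ
  haveI : FiniteDimensional ℝ J := Submodule.finiteDimensional_of_le inf_le_left
  constructor
  · rintro ⟨h1, h2⟩
    refine ⟨h1, ?_⟩
    have hdisj : PiLE n ⊓ J = ⊥ := by
      rw [eq_bot_iff] at h1 ⊢
      exact le_trans (inf_le_inf_left _ inf_le_right) h1
    have hle : PiLE n ⊔ J ≤ PiLE (n + 1) := sup_le (piLE_mono (by omega)) inf_le_left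
    have hsup : PiLE n ⊔ J = PiLE (n + 1) := by
      apply Submodule.eq_of_le_of_finrank_le hle
      have h := Submodule.finrank_sup_add_finrank_inf_eq (PiLE n) J
      rw [hdisj, finrank_bot, h2] at h
      rw [finrank_piLE_succ]
      omega
    apply top_of_piLE_succ_le
    rw [← hsup]
    exact sup_le le_sup_left (le_trans inf_le_right le_sup_right)
  · rintro ⟨h1, htop⟩
    refine ⟨h1, ?_⟩
    have hsub : PiLE (n + 1) ≤ PiLE n ⊔ J := by
      intro p hp
      have hmem : p ∈ PiLE n ⊔ I.restrictScalars ℝ := htop ▸ Submodule.mem_top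
      rw [Submodule.mem_sup] at hmem ⊢
      obtain ⟨r, hr, f, hf, hrf⟩ := hmem
      refine ⟨r, hr, f, Submodule.mem_inf.mpr ⟨?_, hf⟩, hrf⟩
      have hfe : f = p - r := by rw [← hrf]; ring
      rw [hfe]
      exact Submodule.sub_mem _ hp (piLE_mono (by omega) hr)
    have hsup : PiLE n ⊔ J = PiLE (n + 1) :=
      le_antisymm (sup_le (piLE_mono (by omega)) inf_le_left) hsub
    have hdisj : PiLE n ⊓ J = ⊥ := by
      rw [eq_bot_iff] at h1 ⊢
      exact le_trans (inf_le_inf_left _ inf_le_right) h1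
    have h := Submodule.finrank_sup_add_finrank_inf_eq (PiLE n) J
    rw [hsup, hdisj, finrank_bot, finrank_piLE_succ] at h
    omega
end
end

section
/- Let I be an ideal of Π with Π_n ∩ I = 0 and dim(Π_{n+1} ∩ I) = n + 2, and let P be a finite subset of Π_{n+1} ∩ I that spans the vector space Π_{n+1} ∩ I. Then P is an H-basis of I. -/
open MvPolynomial

noncomputable section

lemma degAdd (a b : Fin 2 →₀ ℕ) : (a + b).degree = a.degree + b.degree := by
  simp [Finsupp.degree_eq_weight_one, map_add]

lemma degSum (d : Fin 2 →₀ ℕ) : (d.sum fun _ e => e) = d.degree := rfl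

lemma totalDeg_drop {k : ℕ} {p : BPoly} (h1 : p.totalDegree ≤ k + 1)
    (h2 : homogeneousComponent (k + 1) p = 0) : p.totalDegree ≤ k := by
  rw [totalDegree] at *
  apply Finset.sup_le
  intro d hd
  have hle : (d.sum fun _ e => e) ≤ k + 1 := le_trans (Finset.le_sup (f := fun s => s.sum fun _ e => e) hd) h1
  rcases eq_or_lt_of_le hle with heq | hlt
  · exfalso
    have := coeff_homogeneousComponent (k+1) p d
    rw [h2] at this
    simp only [coeff_zero] at this
    rw [if_pos (by rw [← degSum]; exact heq)] at this
    exact (MvPolynomial.mem_support_iff.mp hd) this.symm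
  · omega

lemma homogComp_monomial_mul (ν : Fin 2 →₀ ℕ) (k : ℕ) (q : BPoly) :
    homogeneousComponent (ν.degree + k) (monomial ν 1 * q) =
      monomial ν 1 * homogeneousComponent k q := by
  ext d
  rw [coeff_homogeneousComponent, coeff_monomial_mul', coeff_monomial_mul',
    coeff_homogeneousComponent]
  by_cases hled : ν ≤ d
  · have hdd : d.degree = ν.degree + (d - ν).degree := by
      conv_lhs => rw [← tsub_add_cancel_of_le hled]
      rw [degAdd]; ring
    split_ifs with h1 h2 h3 <;> simp_all
  · split_ifs <;> simp

lemma exists_split (d : Fin 2 →₀ ℕ) (t : ℕ) (ht : t ≤ d.degree) :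
    ∃ κ, κ ≤ d ∧ κ.degree = t := by
  induction t with
  | zero => exact ⟨0, zero_le, map_zero _⟩
  | succ t ih =>
    obtain ⟨κ, hκd, hdeg⟩ := ih (by omega)
    have hne : ∃ i, κ i < d i := by
      by_contra hc
      push_neg at hc
      have : κ = d := Finsupp.ext fun i => le_antisymm (Finsupp.le_def.mp hκd i) (hc i)
      subst this; omega
    obtain ⟨i, hi⟩ := hne
    refine ⟨κ + Finsupp.single i 1, ?_, ?_⟩
    · rw [Finsupp.le_def]
      intro j
      simp only [Finsupp.add_apply, Finsupp.single_apply]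
      by_cases hj : i = j
      · subst hj; simpa using hi
      · simp [hj]; exact Finsupp.le_def.mp hκd j
    · rw [degAdd, hdeg]
      simp [Finsupp.degree_single]

/-- The set of polynomials expressible as `∑ p ∈ P, g p * p` with all `g p` of
total degree at most `k`. -/
def Dmod (P : Finset BPoly) (k : ℕ) : Submodule ℝ BPoly where
  carrier := {f | ∃ g : BPoly → BPoly, (∀ p ∈ P, (g p).totalDegree ≤ k) ∧ f = ∑ p ∈ P, g p * p}
  add_mem' := by
    rintro a b ⟨g₁, hg₁, rfl⟩ ⟨g₂, hg₂, rfl⟩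
    refine ⟨fun p => g₁ p + g₂ p, fun p hp => ?_, ?_⟩
    · exact le_trans (totalDegree_add _ _) (max_le (hg₁ p hp) (hg₂ p hp))
    · rw [← Finset.sum_add_distrib]
      exact Finset.sum_congr rfl fun p _ => (add_mul _ _ _).symm
  zero_mem' := ⟨0, fun p _ => by simp, by simp⟩
  smul_mem' := by
    rintro c a ⟨g, hg, rfl⟩
    refine ⟨fun p => c • g p, fun p hp => le_trans (totalDegree_smul_le _ _) (hg p hp), ?_⟩
    rw [Finset.smul_sum]
    exact Finset.sum_congr rfl fun p _ => (smul_mul_assoc _ _ _).symm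

lemma Dmod_mono (P : Finset BPoly) {k k' : ℕ} (h : k ≤ k') : Dmod P k ≤ Dmod P k' := by
  rintro f ⟨g, hg, rfl⟩
  exact ⟨g, fun p hp => le_trans (hg p hp) h, rfl⟩

lemma Dmod_mem_ideal {P : Finset BPoly} {k : ℕ} {I : Ideal BPoly}
    (hP : ∀ p ∈ P, p ∈ I) {f : BPoly} (hf : f ∈ Dmod P k) : f ∈ I := by
  obtain ⟨g, -, rfl⟩ := hf
  exact Ideal.sum_mem I fun p hp => I.mul_mem_left _ (hP p hp)

lemma Dmod_totalDegree_le {P : Finset BPoly} {k m : ℕ}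
    (hP : ∀ p ∈ P, p.totalDegree ≤ m) {f : BPoly} (hf : f ∈ Dmod P k) :
    f.totalDegree ≤ k + m := by
  obtain ⟨g, hg, rfl⟩ := hf
  refine le_trans (totalDegree_finset_sum _ _) (Finset.sup_le fun p hp => ?_)
  exact le_trans (totalDegree_mul _ _) (add_le_add (hg p hp) (hP p hp))

lemma fin2_degree (d : Fin 2 →₀ ℕ) : d.degree = d 0 + d 1 := by
  rw [Finsupp.degree_apply, Finset.sum_subset (Finset.subset_univ _)
    (fun i _ h => Finsupp.notMem_support_iff.mp h), Fin.sum_univ_two]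

lemma fin2_eq_single_add (d : Fin 2 →₀ ℕ) :
    d = Finsupp.single 0 (d 0) + Finsupp.single 1 (d 1) := by
  ext i
  fin_cases i <;> simp [Finsupp.single_apply]

theorem stmt5' (n : ℕ) (I : Ideal BPoly)
    (h0 : PiLE n ⊓ I.restrictScalars ℝ = ⊥)
    (h1 : Module.finrank ℝ ↥(PiLE (n + 1) ⊓ I.restrictScalars ℝ) = n + 2)
    (P : Finset BPoly)
    (hP : ∀ p ∈ P, p ∈ PiLE (n + 1) ⊓ I.restrictScalars ℝ)
    (hspan : Submodule.span ℝ (P : Set BPoly) = PiLE (n + 1) ⊓ I.restrictScalars ℝ) :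
    (∀ p ∈ P, p ∈ I) ∧ ∀ f ∈ I, ∃ g : BPoly → BPoly,
      (∀ p ∈ P, (g p).totalDegree ≤ f.totalDegree - p.totalDegree) ∧
        f = ∑ p ∈ P, g p * p := by
  classical
  set V := PiLE (n + 1) ⊓ I.restrictScalars ℝ with hV
  set W := V.map (homogeneousComponent (n + 1) : BPoly →ₗ[ℝ] BPoly) with hW
  set H := homogeneousSubmodule (Fin 2) ℝ (n + 1) with hH
  -- the top-component map is injective on V
  have hker : ∀ q ∈ V, homogeneousComponent (n + 1) q = 0 → q = 0 := by
    intro q hq hq0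
    have hq1 : q.totalDegree ≤ n + 1 := (mem_restrictTotalDegree _ _ _).mp hq.1
    have hqn : q ∈ PiLE n ⊓ I.restrictScalars ℝ :=
      ⟨(mem_restrictTotalDegree _ _ _).mpr (totalDeg_drop hq1 hq0), hq.2⟩
    rw [h0] at hqn
    exact hqn
  -- H is finite dimensional of dimension at most n+2
  have hHle : H ≤ PiLE (n + 1) := by
    intro p hp
    exact (mem_restrictTotalDegree _ _ _).mpr
      ((mem_homogeneousSubmodule _ _).mp hp).totalDegree_le
  have hPiFD : FiniteDimensional ℝ (PiLE (n + 1)) :=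
    inferInstanceAs (Module.Finite ℝ (restrictTotalDegree (Fin 2) ℝ (n + 1)))
  have hHfd : FiniteDimensional ℝ H := Submodule.finiteDimensional_of_le hHle
  have hHrank : Module.finrank ℝ H ≤ n + 2 := by
    set S : Finset BPoly := (Finset.range (n + 2)).image
      (fun k => (monomial (Finsupp.single 0 k + Finsupp.single 1 (n + 1 - k)) 1 : BPoly)) with hS
    have hHS : H ≤ Submodule.span ℝ (S : Set BPoly) := by
      intro p hp
      rw [as_sum p]
      apply Submodule.sum_mem
      intro d hd
      have hdeg : d.degree = n + 1 := by
        rw [Finsupp.degree_eq_weight_one]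
        exact ((mem_homogeneousSubmodule _ _).mp hp) (MvPolynomial.mem_support_iff.mp hd)
      have hd01 : d 0 + d 1 = n + 1 := by rw [← fin2_degree]; exact hdeg
      have hmem : (monomial d 1 : BPoly) ∈ (S : Set BPoly) := by
        rw [hS]
        simp only [Finset.coe_image, Set.mem_image, Finset.mem_coe, Finset.mem_range]
        refine ⟨d 0, by omega, ?_⟩
        rw [show n + 1 - d 0 = d 1 from by omega, ← fin2_eq_single_add d]
      have h3 : (monomial d (coeff d p) : BPoly) = coeff d p • monomial d 1 := by
        rw [smul_monomial, smul_eq_mul, mul_one]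
      rw [h3]
      exact Submodule.smul_mem _ _ (Submodule.subset_span hmem)
    calc Module.finrank ℝ H ≤ Module.finrank ℝ (Submodule.span ℝ (S : Set BPoly)) :=
          Submodule.finrank_mono hHS
      _ ≤ S.card := finrank_span_finset_le_card S
      _ ≤ n + 2 := le_trans (Finset.card_image_le) (by simp)
  -- W = H
  have hWH : W ≤ H := by
    rintro _ ⟨q, -, rfl⟩
    exact homogeneousComponent_mem _ _
  have hWrank : Module.finrank ℝ W = n + 2 := by
    set φ : V →ₗ[ℝ] BPoly :=
      (homogeneousComponent (n + 1) : BPoly →ₗ[ℝ] BPoly).comp V.subtype with hφ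
    have hφinj : Function.Injective φ := by
      rw [← LinearMap.ker_eq_bot, LinearMap.ker_eq_bot']
      rintro ⟨q, hq⟩ h
      simp only [hφ, LinearMap.comp_apply, Submodule.subtype_apply] at h
      exact Subtype.ext (hker q hq h)
    have hφr : LinearMap.range φ = W := by
      rw [hφ, LinearMap.range_comp, Submodule.range_subtype]
    rw [← hφr, LinearMap.finrank_range_of_inj hφinj, h1]
  have hWeq : W = H :=
    Submodule.eq_of_le_of_finrank_le hWH (by rw [hWrank]; exact hHrank)
  -- every monomial of degree n+1 is a top component of an element of V
  have hmono : ∀ κ : Fin 2 →₀ ℕ, κ.degree = n + 1 →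
      ∃ q ∈ V, homogeneousComponent (n + 1) q = monomial κ 1 := by
    intro κ hκ
    have hmem : (monomial κ 1 : BPoly) ∈ W := by
      rw [hWeq, hH, mem_homogeneousSubmodule]
      exact isHomogeneous_monomial _ hκ
    obtain ⟨q, hq, hq'⟩ := hmem
    exact ⟨q, hq, hq'⟩
  -- main induction
  have key : ∀ m : ℕ, ∀ f ∈ I, f.totalDegree ≤ m → f ∈ Dmod P (m - (n + 1)) := by
    intro m
    induction m with
    | zero =>
      intro f hf hdeg
      have hmem : f ∈ PiLE n ⊓ I.restrictScalars ℝ :=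
        ⟨(mem_restrictTotalDegree _ _ _).mpr (le_trans hdeg (Nat.zero_le n)), hf⟩
      rw [h0] at hmem
      rw [show f = 0 from hmem]
      exact Submodule.zero_mem _
    | succ m ih =>
      intro f hf hdeg
      by_cases hmn : m + 1 ≤ n
      · have hmem : f ∈ PiLE n ⊓ I.restrictScalars ℝ :=
          ⟨(mem_restrictTotalDegree _ _ _).mpr (le_trans hdeg hmn), hf⟩
        rw [h0] at hmem
        rw [show f = 0 from hmem]
        exact Submodule.zero_mem _
      · push_neg at hmn
        have hnm : n ≤ m := by omega
        have hcomp : homogeneousComponent (m + 1) f ∈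
            Submodule.map (homogeneousComponent (m + 1) : BPoly →ₗ[ℝ] BPoly)
              (Dmod P (m - n) ⊓ PiLE (m + 1)) := by
          have hfh : (homogeneousComponent (m + 1) f).IsHomogeneous (m + 1) :=
            homogeneousComponent_isHomogeneous _ _
          rw [as_sum (homogeneousComponent (m + 1) f)]
          apply Submodule.sum_mem
          intro d hd
          have hdeg' : d.degree = m + 1 := by
            rw [Finsupp.degree_eq_weight_one]
            exact hfh (MvPolynomial.mem_support_iff.mp hd)
          have hred : (monomial d 1 : BPoly) ∈
              Submodule.map (homogeneousComponent (m + 1) : BPoly →ₗ[ℝ] BPoly)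
                (Dmod P (m - n) ⊓ PiLE (m + 1)) := by
            obtain ⟨κ, hκd, hκdeg⟩ := exists_split d (n + 1) (by rw [hdeg']; omega)
            set ν := d - κ with hν
            have hνκ : ν + κ = d := tsub_add_cancel_of_le hκd
            have hνdeg : ν.degree = m - n := by
              have h4 := degAdd ν κ
              rw [hνκ, hdeg', hκdeg] at h4
              omega
            obtain ⟨q, hqV, hqL⟩ := hmono κ hκdeg
            have hqP : q ∈ Submodule.span ℝ (P : Set BPoly) := by rw [hspan]; exact hqV
            obtain ⟨a, -, ha⟩ := Submodule.mem_span_finset.mp hqP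
            refine Submodule.mem_map.mpr ⟨monomial ν 1 * q, ⟨⟨fun p => a p • monomial ν 1,
              ?_, ?_⟩, ?_⟩, ?_⟩
            · intro p hp
              refine le_trans (totalDegree_smul_le _ _) ?_
              rw [totalDegree_monomial _ (one_ne_zero), degSum, hνdeg]
            · rw [← ha, Finset.mul_sum]
              exact Finset.sum_congr rfl fun p _ => by rw [smul_mul_assoc, mul_smul_comm]
            · refine (mem_restrictTotalDegree _ _ _).mpr ?_
              refine le_trans (totalDegree_mul _ _) ?_
              rw [totalDegree_monomial _ one_ne_zero, degSum, hνdeg]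
              have hq1 : q.totalDegree ≤ n + 1 := (mem_restrictTotalDegree _ _ _).mp hqV.1
              omega
            · have hmi : m + 1 = ν.degree + (n + 1) := by omega
              rw [hmi, homogComp_monomial_mul, hqL, monomial_mul, one_mul, hνκ]
          have h5 : (monomial d (coeff d (homogeneousComponent (m + 1) f)) : BPoly) =
              coeff d (homogeneousComponent (m + 1) f) • monomial d 1 := by
            rw [smul_monomial, smul_eq_mul, mul_one]
          rw [h5]
          exact Submodule.smul_mem _ _ hred
        obtain ⟨u, ⟨huD, huPi⟩, huL⟩ := hcomp
        have huI : u ∈ I := Dmod_mem_ideal (fun p hp => (hP p hp).2) huD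
        have hfu : f - u ∈ I := I.sub_mem hf huI
        have hdeg2 : (f - u).totalDegree ≤ m := by
          apply totalDeg_drop
          · exact le_trans (totalDegree_sub _ _)
              (max_le hdeg ((mem_restrictTotalDegree _ _ _).mp huPi))
          · rw [map_sub, huL, sub_self]
        have hfu' := ih (f - u) hfu hdeg2
        have h6 : f = (f - u) + u := by ring
        rw [h6, Nat.succ_sub_succ]
        exact Submodule.add_mem _ (Dmod_mono P (by omega) hfu') huD
  refine ⟨fun p hp => (hP p hp).2, fun f hf => ?_⟩
  obtain ⟨g, hg, hrep⟩ := key f.totalDegree f hf le_rfl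
  refine ⟨g, fun p hp => ?_, hrep⟩
  have hdp : p.totalDegree ≤ n + 1 := (mem_restrictTotalDegree _ _ _).mp (hP p hp).1
  exact le_trans (hg p hp) (Nat.sub_le_sub_left hdp _)


/-- If `Π_n ∩ I = 0`, `dim (Π_{n+1} ∩ I) = n+2` and `P` is a
finite subset of `Π_{n+1} ∩ I` spanning it, then `P` is an H-basis of `I`. -/
theorem stmt5 (n : ℕ) (I : Ideal BPoly)
    (h0 : PiLE n ⊓ I.restrictScalars ℝ = ⊥)
    (h1 : Module.finrank ℝ ↥(PiLE (n + 1) ⊓ I.restrictScalars ℝ) = n + 2)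
    (P : Finset BPoly)
    (hP : ∀ p ∈ P, p ∈ PiLE (n + 1) ⊓ I.restrictScalars ℝ)
    (hspan : Submodule.span ℝ (P : Set BPoly) = PiLE (n + 1) ⊓ I.restrictScalars ℝ) :
    IsHBasisSet I P := by
  exact stmt5' n I h0 h1 P hP hspan
end
end

section
/- Let Y_{n+1} ⊂ ℝ² be a Π_{n+1}-poised set and K a line such that #(K ∩ Y_{n+1}) = n + 2. Then the set Y_n := Y_{n+1} \ K is Π_n-poised. -/
open MvPolynomial

noncomputable section

open Finset in
def Bm (m : ℕ) : Finset (ℕ × ℕ) := (range (m+1)).biUnion Finset.HasAntidiagonal.antidiagonal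

open Finset in
lemma card_Bm (m : ℕ) : (Bm m).card = ∑ j ∈ range (m+1), (j+1) := by
  rw [Bm, Finset.card_biUnion]
  · exact Finset.sum_congr rfl fun j _ => Finset.Nat.card_antidiagonal j
  · intro i _ j _ hij
    simp only [Finset.disjoint_left, Finset.HasAntidiagonal.mem_antidiagonal]
    rintro p rfl h; exact hij h

def eAux (m : ℕ) : {s : Fin 2 →₀ ℕ // (s.sum fun _ e => e) ≤ m} ≃ (Bm m) := by
  refine Equiv.trans
    ((Finsupp.equivFunOnFinite.trans (finTwoArrowEquiv ℕ)).subtypeEquiv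
      (q := fun p : ℕ × ℕ => p.1 + p.2 ≤ m) ?_)
    (Equiv.subtypeEquivRight ?_)
  · intro s
    have : (s.sum fun _ e => e) = s 0 + s 1 := by
      rw [Finsupp.sum_fintype _ _ (fun _ => rfl), Fin.sum_univ_two]
    simp [this, finTwoArrowEquiv, Finsupp.equivFunOnFinite]
  · intro p
    simp only [Bm, Finset.mem_biUnion, Finset.mem_range, Finset.HasAntidiagonal.mem_antidiagonal]
    constructor
    · intro h; exact ⟨p.1 + p.2, Nat.lt_succ_of_le h, rfl⟩
    · rintro ⟨j, hj, rfl⟩; omega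

lemma finrank_PiLE (m : ℕ) :
    Module.finrank ℝ (PiLE m) = ∑ j ∈ Finset.range (m+1), (j+1) := by
  classical
  letI : Fintype ↑{n : Fin 2 →₀ ℕ | (n.sum fun _ e => e) ≤ m} :=
    Fintype.ofEquiv (Bm m) (eAux m).symm
  have b := MvPolynomial.basisRestrictSupport ℝ
    {n : Fin 2 →₀ ℕ | (n.sum fun _ e => e) ≤ m}
  rw [show PiLE m = MvPolynomial.restrictSupport ℝ
      {n : Fin 2 →₀ ℕ | (n.sum fun _ e => e) ≤ m} from rfl,
    Module.finrank_eq_card_basis b, @Fintype.card_congr _ _ this _ (eAux m), Fintype.card_coe, card_Bm]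


/-- The evaluation map of `Π_m` on a finite point set. -/
def evalMap (m : ℕ) (Z : Finset Pt) : PiLE m →ₗ[ℝ] (Z → ℝ) where
  toFun p := fun y => eval (y : Pt) (p : BPoly)
  map_add' p q := by funext y; simp
  map_smul' c p := by funext y; simp [smul_eq_mul]

instance PiLE_finite (m : ℕ) : Module.Finite ℝ (PiLE m) :=
  inferInstanceAs (Module.Finite ℝ (MvPolynomial.restrictTotalDegree (Fin 2) ℝ m))

lemma mem_PiLE {m : ℕ} {p : BPoly} : p ∈ PiLE m ↔ p.totalDegree ≤ m := by
  rw [PiLE, MvPolynomial.mem_restrictTotalDegree]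


/-- If `Y_{n+1}` is `Π_{n+1}`-poised and `K = V(k)` is a line
meeting `Y_{n+1}` in `n+2` points, then `Y_n := Y_{n+1} \ K` is `Π_n`-poised. -/
theorem stmt6 (n : ℕ) (Y : Finset Pt) (k : BPoly) (hk : k.totalDegree = 1)
    (hY : Poised (n + 1) Y)
    (hcard : ((Y : Set Pt) ∩ {x | eval x k = 0}).ncard = n + 2)
    (Y' : Finset Pt)
    (hY' : (Y' : Set Pt) = (Y : Set Pt) \ {x | eval x k = 0}) :
    Poised n Y' := by
  classical
  have hk0 : k ≠ 0 := fun h => by simp [h] at hk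
  -- uniqueness from poisedness of Y
  have hker1 : ∀ p : BPoly, p ∈ PiLE (n+1) → (∀ y ∈ Y, eval y p = 0) → p = 0 := by
    intro p hp hvan
    obtain ⟨q, _, huniq⟩ := hY (fun _ => 0)
    exact (huniq p ⟨hp, hvan⟩).trans (huniq 0 ⟨(PiLE (n+1)).zero_mem, by simp⟩).symm
  -- the evaluation map on Y is bijective
  have hinj1 : Function.Injective (evalMap (n+1) Y) := by
    rw [← LinearMap.ker_eq_bot, LinearMap.ker_eq_bot']
    intro p hp
    refine Subtype.ext (hker1 p p.2 fun y hy => ?_)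
    exact congrFun hp ⟨y, hy⟩
  have hsurj1 : Function.Surjective (evalMap (n+1) Y) := by
    intro g
    obtain ⟨p, ⟨hp1, hp2⟩, -⟩ := hY (fun x => if h : x ∈ Y then g ⟨x, h⟩ else 0)
    refine ⟨⟨p, hp1⟩, funext fun y => ?_⟩
    simpa [y.2, evalMap] using hp2 y y.2
  have hfr1 : Module.finrank ℝ (PiLE (n+1)) = Y.card := by
    rw [(LinearEquiv.ofBijective _ ⟨hinj1, hsurj1⟩).finrank_eq,
      Module.finrank_fintype_fun_eq_card, Fintype.card_coe]
  -- cardinality of Y'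
  have hYcard : Y'.card + (n + 2) = Y.card := by
    have h := Set.ncard_inter_add_ncard_diff_eq_ncard (Y : Set Pt) {x | eval x k = 0}
      (Y.finite_toSet)
    rw [hcard, ← hY', Set.ncard_coe_finset, Set.ncard_coe_finset] at h
    omega
  -- finrank of PiLE n equals card Y'
  have hstep : Module.finrank ℝ (PiLE n) + (n + 2) = Module.finrank ℝ (PiLE (n+1)) := by
    rw [finrank_PiLE, finrank_PiLE]
    conv_rhs => rw [Finset.sum_range_succ]
  have hfr0 : Module.finrank ℝ (PiLE n) = Y'.card := by omega
  -- injectivity of the evaluation map on Y'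
  have hinj0 : Function.Injective (evalMap n Y') := by
    rw [← LinearMap.ker_eq_bot, LinearMap.ker_eq_bot']
    intro p hp
    have hvan : ∀ y ∈ Y', eval y (p : BPoly) = 0 := fun y hy => congrFun hp ⟨y, hy⟩
    have hkp : k * (p : BPoly) ∈ PiLE (n+1) := by
      rw [mem_PiLE]
      refine le_trans (MvPolynomial.totalDegree_mul _ _) ?_
      have := mem_PiLE.mp p.2
      omega
    have hkv : ∀ y ∈ Y, eval y (k * (p : BPoly)) = 0 := by
      intro y hy
      by_cases hyK : eval y k = 0
      · simp [hyK]
      · have hy' : y ∈ Y' := by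
          have : y ∈ (Y' : Set Pt) := by rw [hY']; exact ⟨hy, hyK⟩
          exact this
        simp [hvan y hy']
    have := hker1 _ hkp hkv
    rcases mul_eq_zero.mp this with h | h
    · exact absurd h hk0
    · exact Subtype.ext h
  have hsurj0 : Function.Surjective (evalMap n Y') := by
    refine (LinearMap.injective_iff_surjective_of_finrank_eq_finrank ?_).mp hinj0
    rw [hfr0, Module.finrank_fintype_fun_eq_card, Fintype.card_coe]
  -- conclusion
  intro f
  obtain ⟨p, hp⟩ := hsurj0 (fun y => f y)
  refine ⟨(p : BPoly), ⟨p.2, fun y hy => congrFun hp ⟨y, hy⟩⟩, ?_⟩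
  rintro q ⟨hq1, hq2⟩
  have : (⟨q, hq1⟩ : PiLE n) = p := by
    apply hinj0
    funext y
    show eval (y : Pt) q = _
    rw [hq2 y y.2, congrFun hp y]
  exact congrArg Subtype.val this
end
end

section
/- Let Y_n ⊂ ℝ² be a Π_n-poised set and K a line with Y_n ∩ K = ∅. If Y_{n+1} is obtained from Y_n by adding n + 2 distinct points lying on K, then Y_{n+1} is Π_{n+1}-poised. -/
open MvPolynomial

noncomputable section

lemma homc_ne_zero {σ : Type*} {R : Type*} [CommRing R] {q : MvPolynomial σ R} (hq : q ≠ 0) :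
    homogeneousComponent q.totalDegree q ≠ 0 := by
  classical
  obtain ⟨m, hm, hdeg⟩ := Finset.exists_mem_eq_sup q.support
    (by rwa [Finset.nonempty_iff_ne_empty, ne_eq, support_eq_empty]) (fun s => s.sum fun _ e => e)
  intro h0
  have := coeff_homogeneousComponent (φ := q) (n := q.totalDegree) m
  rw [h0] at this
  simp only [coeff_zero] at this
  rw [if_pos] at this
  · exact (mem_support_iff.mp hm) this.symm
  · show m.degree = q.support.sup fun s => s.sum fun _ e => e
    rw [hdeg]
    simp [Finsupp.degree, Finsupp.sum]
    rfl

lemma totalDegree_mul_eq' {σ : Type*} {R : Type*} [CommRing R] [IsDomain R]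
    {p q : MvPolynomial σ R} (hp : p ≠ 0) (hq : q ≠ 0) :
    (p * q).totalDegree = p.totalDegree + q.totalDegree := by
  classical
  refine le_antisymm (totalDegree_mul p q) ?_
  set a := p.totalDegree with ha
  set b := q.totalDegree with hb
  by_contra hlt
  push_neg at hlt
  have h0 : homogeneousComponent (a + b) (p * q) = 0 := by
    apply homogeneousComponent_eq_zero; exact hlt
  have hpq : p * q = ∑ i ∈ Finset.range (a + 1), ∑ j ∈ Finset.range (b + 1),
      homogeneousComponent i p * homogeneousComponent j q := by
    rw [← Finset.sum_mul_sum, sum_homogeneousComponent, sum_homogeneousComponent]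
  rw [hpq, map_sum] at h0
  simp only [map_sum] at h0
  have key : ∀ i ∈ Finset.range (a + 1), ∀ j ∈ Finset.range (b + 1),
      homogeneousComponent (a + b) (homogeneousComponent i p * homogeneousComponent j q)
      = if j = b then (if i = a then homogeneousComponent a p * homogeneousComponent b q else 0)
        else 0 := by
    intro i hi j hj
    simp only [Finset.mem_range] at hi hj
    have hhom : (homogeneousComponent i p * homogeneousComponent j q) ∈
        homogeneousSubmodule σ R (i + j) :=
      (homogeneousComponent_isHomogeneous i p).mul (homogeneousComponent_isHomogeneous j q)
    rw [homogeneousComponent_of_mem hhom]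
    by_cases hij : i = a ∧ j = b
    · obtain ⟨rfl, rfl⟩ := hij; simp
    · have hne : ¬(a + b = i + j) := by omega
      rw [if_neg hne]
      by_cases hjb : j = b
      · have : ¬(i = a) := by omega
        simp [hjb, this]
      · simp [hjb]
  rw [Finset.sum_congr rfl (fun i hi => Finset.sum_congr rfl (fun j hj => key i hi j hj))] at h0
  simp only [Finset.sum_ite_eq' (Finset.range (b + 1)), Finset.mem_range, lt_add_iff_pos_left,
    Nat.lt_succ_self, if_pos (Nat.lt_succ_self b)] at h0
  simp only [if_true, Finset.sum_ite_eq' (Finset.range (a + 1)), Finset.mem_range,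
    Nat.lt_succ_self, if_pos] at h0
  exact mul_ne_zero (homc_ne_zero hp) (homc_ne_zero hq) h0


lemma fin2_degree_le_one (m : Fin 2 →₀ ℕ) (h : m.sum (fun _ e => e) ≤ 1) :
    m = 0 ∨ m = Finsupp.single 0 1 ∨ m = Finsupp.single 1 1 := by
  classical
  have hsum : m 0 + m 1 = m.sum fun _ e => e := by
    rw [Finsupp.sum_fintype _ _ (fun _ => rfl), Fin.sum_univ_two]
  by_cases h0 : m 0 = 0 <;> by_cases h1 : m 1 = 0
  · left; ext i; fin_cases i <;> simp [h0, h1]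
  · right; right; ext i
    have : m 1 = 1 := by omega
    fin_cases i <;> simp [h0, this, Finsupp.single_apply]
  · right; left; ext i
    have : m 0 = 1 := by omega
    fin_cases i <;> simp [h1, this, Finsupp.single_apply]
  · omega

lemma kform (k : BPoly) (hk : k.totalDegree = 1) :
    ∃ c a b : ℝ, ¬(a = 0 ∧ b = 0) ∧
      k = C c + C a * X 0 + C b * X 1 := by
  classical
  refine ⟨coeff 0 k, coeff (Finsupp.single 0 1) k, coeff (Finsupp.single 1 1) k, ?_, ?_⟩
  · rintro ⟨h0, h1⟩
    have hm : ∀ m ∈ k.support, m = 0 := by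
      intro m hm
      have hle : m.sum (fun _ e => e) ≤ 1 := hk ▸ le_totalDegree hm
      rcases fin2_degree_le_one m hle with h | h | h
      · exact h
      · exact absurd (h ▸ mem_support_iff.mp hm) (by simpa using h0)
      · exact absurd (h ▸ mem_support_iff.mp hm) (by simpa using h1)
    have : k.totalDegree = 0 := by
      rw [MvPolynomial.totalDegree]
      apply Nat.le_antisymm _ (Nat.zero_le _)
      apply Finset.sup_le
      intro m hmem
      rw [hm m hmem]
      simp
    omega
  · ext m
    simp only [coeff_add, coeff_C, coeff_C_mul, coeff_X']
    by_cases hle : m.sum (fun _ e => e) ≤ 1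
    · rcases fin2_degree_le_one m hle with h | h | h <;> subst h <;>
        simp [Finsupp.single_eq_zero, eq_comm, Finsupp.single_left_inj]
    · have hnot : m ∉ k.support := fun hmem => hle (hk ▸ le_totalDegree hmem)
      rw [notMem_support_iff] at hnot
      rw [hnot]
      have h0 : ¬ (0 : Fin 2 →₀ ℕ) = m := by rintro rfl; simp at hle
      have h1 : ¬ Finsupp.single (0:Fin 2) 1 = m := by rintro rfl; simp [Finsupp.sum_single_index] at hle
      have h2 : ¬ Finsupp.single (1:Fin 2) 1 = m := by rintro rfl; simp [Finsupp.sum_single_index] at hle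
      simp [h0, h1, h2]


lemma eval_affine (c a b : ℝ) (y : Pt) :
    eval y (C c + C a * X 0 + C b * X 1 : BPoly) = c + a * y 0 + b * y 1 := by
  simp

-- Lemma A: interpolation on a set with injective coordinate
lemma interp_coord (T : Finset Pt) (j : Fin 2)
    (hinj : ∀ t ∈ T, ∀ t' ∈ T, t j = t' j → t = t') (f : Pt → ℝ) (hT : T.Nonempty) :
    ∃ q : BPoly, q.totalDegree ≤ T.card - 1 ∧ ∀ t ∈ T, eval t q = f t := by
  classical
  have hvs : Set.InjOn (fun t : Pt => t j) T := fun x hx y hy h => hinj x hx y hy h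
  set L := Lagrange.interpolate T (fun t : Pt => t j) f with hL
  have hdeg : L.degree < T.card := Lagrange.degree_interpolate_lt f hvs
  have hnd : L.natDegree ≤ T.card - 1 := by
    rcases eq_or_ne L 0 with h | hL0
    · simp [h]
    · have hlt : L.natDegree < T.card :=
        (Polynomial.natDegree_lt_iff_degree_lt (n := T.card) hL0).mpr (by exact_mod_cast hdeg)
      omega
  refine ⟨Polynomial.aeval (X j : BPoly) L, ?_, ?_⟩
  · rw [Polynomial.aeval_eq_sum_range]
    apply (totalDegree_finset_sum _ _).trans
    apply Finset.sup_le
    intro i hi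
    simp only [Finset.mem_range] at hi
    calc (L.coeff i • (X j : BPoly) ^ i).totalDegree
        ≤ (C (L.coeff i) * (X j : BPoly) ^ i).totalDegree := by rw [smul_eq_C_mul]
      _ ≤ (C (L.coeff i)).totalDegree + ((X j : BPoly) ^ i).totalDegree := totalDegree_mul _ _
      _ ≤ 0 + i := by
          rw [totalDegree_C, totalDegree_X_pow]
      _ ≤ T.card - 1 := by
          have := hT.card_pos
          omega
  · intro t ht
    have : eval t (Polynomial.aeval (X j : BPoly) L) = Polynomial.eval (t j) L := by
      rw [Polynomial.aeval_def, Polynomial.hom_eval₂]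
      have hcomp : (eval t).comp (algebraMap ℝ BPoly) = RingHom.id ℝ := by
        ext r; simp
      rw [hcomp, eval_X]
      rfl
    rw [this]
    exact Lagrange.eval_interpolate_at_node f hvs ht


lemma finsucc_C (r : ℝ) : finSuccEquiv ℝ 1 (C r) = Polynomial.C (C r) := by
  simp [finSuccEquiv_apply]

lemma cons_eq_self (t : Pt) : (Fin.cons (t 0) (fun _ : Fin 1 => t 1) : Fin 2 → ℝ) = t := by
  funext i
  refine Fin.cases ?_ (fun j => ?_) i
  · rw [Fin.cons_zero]
  · rw [Fin.cons_succ]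
    have : j = 0 := Fin.eq_zero j
    subst this
    rfl

lemma cons_const (x : ℝ) : (Fin.cons x (fun i : Fin 0 => i.elim0) : Fin 1 → ℝ) = fun _ => x := by
  funext i
  have : i = 0 := Fin.eq_zero i
  subst this
  rw [Fin.cons_zero]

lemma factor_aux (k : BPoly) (c a b : ℝ) (ha : a ≠ 0)
    (hk : k = C c + C a * X 0 + C b * X 1)
    (T : Finset Pt) (hT : ∀ t ∈ T, eval t k = 0)
    (p : BPoly) (hdeg : p.totalDegree + 1 ≤ T.card) (hpT : ∀ t ∈ T, eval t p = 0) :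
    ∃ q : BPoly, p = k * q := by
  classical
  set E := finSuccEquiv ℝ 1 with hE
  set u : MvPolynomial (Fin 1) ℝ := C (-(c/a)) + C (-(b/a)) * X 0 with hu
  have hau : (C a : MvPolynomial (Fin 1) ℝ) * u = C (-c) + C (-b) * X 0 := by
    rw [hu, mul_add, ← mul_assoc, ← C_mul, ← C_mul]
    rw [show a * -(c/a) = -c by field_simp, show a * -(b/a) = -b by field_simp]
  have hEk : E k = Polynomial.C (C a) * (Polynomial.X - Polynomial.C u) := by
    rw [hk]
    rw [map_add, map_add, map_mul, map_mul, finsucc_C, finsucc_C, finsucc_C, hE]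
    rw [finSuccEquiv_X_zero, show (X 1 : BPoly) = X (Fin.succ 0) from rfl, finSuccEquiv_X_succ]
    have hrhs : Polynomial.C (C a) * (Polynomial.X - Polynomial.C u)
        = Polynomial.C (C a) * Polynomial.X - Polynomial.C (C (-c) + C (-b) * X 0) := by
      rw [mul_sub, ← Polynomial.C_mul, hau]
    rw [hrhs, map_add, map_mul, map_neg, map_neg]
    simp only [map_mul, map_add, map_neg]
    ring
  set P := E p with hP
  set Rm : MvPolynomial (Fin 1) ℝ := Polynomial.eval u P with hRm
  have hline : ∀ t ∈ T, c + a * t 0 + b * t 1 = 0 := by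
    intro t ht
    have := hT t ht
    rw [hk] at this
    simpa using this
  have hevalhom : ∀ (s : Fin 1 → ℝ), eval s Rm =
      Polynomial.eval (eval s u) (P.map (eval s)) := by
    intro s
    rw [hRm]
    show eval s (Polynomial.eval₂ (RingHom.id _) u P) = _
    rw [Polynomial.hom_eval₂, Polynomial.eval_map]
    rfl
  have hRmt : ∀ t ∈ T, eval (fun _ : Fin 1 => t 1) Rm = 0 := by
    intro t ht
    set s : Fin 1 → ℝ := fun _ => t 1 with hs
    have hsu : eval s u = t 0 := by
      have h := hline t ht
      have h1 : eval s u = -(c/a) + -(b/a) * t 1 := by simp [hu, hs]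
      have h2 : t 0 = (-c - b * t 1)/a := by
        rw [eq_div_iff ha]; linarith
      rw [h1, h2]; ring
    have h1 : eval t p = Polynomial.eval (t 0) (P.map (eval s)) := by
      rw [← eval_eq_eval_mv_eval' s (t 0) p, cons_eq_self]
    rw [hevalhom s, hsu, ← h1]
    exact hpT t ht
  -- degree bound for Rm
  have hudeg : u.totalDegree ≤ 1 := by
    apply (totalDegree_add _ _).trans
    simp only [totalDegree_C, max_le_iff]
    constructor
    · omega
    · apply (totalDegree_mul _ _).trans
      simp [totalDegree_C, totalDegree_X]
  have hRmdeg : Rm.totalDegree ≤ p.totalDegree := by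
    rw [hRm, Polynomial.eval_eq_sum_range]
    apply (totalDegree_finset_sum _ _).trans
    apply Finset.sup_le
    intro i hi
    by_cases hci : P.coeff i = 0
    · simp [hci]
    · apply (totalDegree_mul _ _).trans
      have h1 : (u ^ i).totalDegree ≤ i := by
        apply (totalDegree_pow _ _).trans
        calc i * u.totalDegree ≤ i * 1 := Nat.mul_le_mul_left i hudeg
          _ = i := mul_one i
      have h2 := totalDegree_coeff_finSuccEquiv_add_le p i hci
      rw [← hE, ← hP] at h2
      omega
  -- univariate
  set R1 : Polynomial ℝ := (finSuccEquiv ℝ 0 Rm).map (eval (fun i : Fin 0 => i.elim0)) with hR1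
  have hR1eval : ∀ x : ℝ, Polynomial.eval x R1 = eval (fun _ : Fin 1 => x) Rm := by
    intro x
    rw [hR1, ← eval_eq_eval_mv_eval' (fun i : Fin 0 => i.elim0) x Rm, cons_const]
  have hR1deg : R1.natDegree ≤ p.totalDegree := by
    apply Polynomial.natDegree_map_le.trans
    rw [natDegree_finSuccEquiv]
    exact (degreeOf_le_totalDegree Rm 0).trans hRmdeg
  have hinj1 : Function.Injective (fun t : ↥T => (t : Pt) 1) := by
    rintro ⟨t, ht⟩ ⟨t', ht'⟩ h
    simp only at h
    have h1 := hline t ht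
    have h2 := hline t' ht'
    have h3 : a * t 0 = a * t' 0 := by rw [h] at h1; linarith
    have h0 : t 0 = t' 0 := mul_left_cancel₀ ha h3
    ext i
    fin_cases i
    · exact h0
    · exact h
  have hR1zero : R1 = 0 := by
    apply Polynomial.eq_zero_of_natDegree_lt_card_of_eval_eq_zero R1 hinj1
    · intro t
      rw [hR1eval]
      exact hRmt t t.2
    · rw [Fintype.card_coe]
      omega
  have hRmzero : Rm = 0 := by
    have hinj0 : Function.Injective (eval (fun i : Fin 0 => i.elim0) :
        MvPolynomial (Fin 0) ℝ →+* ℝ) := by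
      intro x y hxy
      obtain ⟨x', rfl⟩ := C_surjective (Fin 0) x
      obtain ⟨y', rfl⟩ := C_surjective (Fin 0) y
      simp only [eval_C] at hxy
      rw [hxy]
    have := (Polynomial.map_eq_zero_iff hinj0).mp hR1zero
    exact (map_eq_zero_iff _ (AlgEquiv.injective _)).mp this
  -- divisibility
  have hPu : Polynomial.eval u P = 0 := hRmzero
  obtain ⟨Q, hQ⟩ := Polynomial.X_sub_C_dvd_sub_C_eval (a := u) (p := P)
  rw [hPu, map_zero, sub_zero] at hQ
  refine ⟨C a⁻¹ * E.symm Q, ?_⟩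
  apply E.injective
  rw [map_mul, map_mul, hEk, hE, finsucc_C, AlgEquiv.apply_symm_apply, ← hE, ← hP, hQ]
  rw [← mul_assoc]
  rw [show Polynomial.C (C a) * (Polynomial.X - Polynomial.C u) * Polynomial.C (C a⁻¹)
      = Polynomial.C (C (a * a⁻¹)) * (Polynomial.X - Polynomial.C u) by push_cast [map_mul]; ring]
  rw [mul_inv_cancel₀ ha]
  simp [mul_comm]


lemma factor_general (k : BPoly) (hk1 : k.totalDegree = 1)
    (T : Finset Pt) (hT : ∀ t ∈ T, eval t k = 0)
    (p : BPoly) (hdeg : p.totalDegree + 1 ≤ T.card) (hpT : ∀ t ∈ T, eval t p = 0) :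
    ∃ q : BPoly, p = k * q := by
  classical
  obtain ⟨c, a, b, hab, hk⟩ := kform k hk1
  by_cases ha : a = 0
  · have hb : b ≠ 0 := fun hb => hab ⟨ha, hb⟩
    set e : Fin 2 ≃ Fin 2 := Equiv.swap 0 1 with he
    have hee : ∀ x : Fin 2, e (e x) = x := fun x => Equiv.swap_apply_self 0 1 x
    have hcompinj : Function.Injective (fun t : Pt => t ∘ ⇑e) := by
      intro x y hxy
      funext i
      have := congrFun hxy (e i)
      simpa [hee] using this
    set T' : Finset Pt := T.image (fun t : Pt => t ∘ ⇑e) with hT'def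
    have hcard' : T'.card = T.card := Finset.card_image_of_injective T hcompinj
    have hcompself : ∀ t : Pt, (t ∘ ⇑e) ∘ ⇑e = t := by
      intro t; funext i; simp [Function.comp, hee]
    have hk' : rename ⇑e k = C c + C b * X 0 + C a * X 1 := by
      rw [hk]
      simp only [map_add, map_mul, rename_C, rename_X, he, Equiv.swap_apply_left,
        Equiv.swap_apply_right]
      ring
    have hT'1 : ∀ t' ∈ T', eval t' (rename ⇑e k) = 0 := by
      intro t' ht'
      obtain ⟨t, ht, rfl⟩ := Finset.mem_image.mp ht'
      rw [eval_rename, hcompself]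
      exact hT t ht
    have hpT' : ∀ t' ∈ T', eval t' (rename ⇑e p) = 0 := by
      intro t' ht'
      obtain ⟨t, ht, rfl⟩ := Finset.mem_image.mp ht'
      rw [eval_rename, hcompself]
      exact hpT t ht
    have hdeg' : (rename ⇑e p).totalDegree + 1 ≤ T'.card := by
      have := totalDegree_rename_le ⇑e p
      omega
    obtain ⟨q', hq'⟩ := factor_aux (rename ⇑e k) c b a hb hk' T' hT'1 (rename ⇑e p) hdeg' hpT'
    refine ⟨rename ⇑e q', ?_⟩
    have h2 := congrArg (rename ⇑e) hq'
    rw [map_mul, rename_rename, rename_rename] at h2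
    have heid : (⇑e ∘ ⇑e) = id := by funext x; simp [hee]
    rw [heid] at h2
    simp only [rename_id] at h2
    exact h2
  · exact factor_aux k c a b ha hk T hT p hdeg hpT


lemma line_inj (k : BPoly) (c a b : ℝ) (hab : ¬(a = 0 ∧ b = 0))
    (hk : k = C c + C a * X 0 + C b * X 1)
    (T : Finset Pt) (hT : ∀ t ∈ T, eval t k = 0) :
    ∃ j : Fin 2, ∀ t ∈ T, ∀ t' ∈ T, t j = t' j → t = t' := by
  have hline : ∀ t ∈ T, c + a * t 0 + b * t 1 = 0 := by
    intro t ht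
    have := hT t ht
    rw [hk] at this
    simpa using this
  by_cases ha : a = 0
  · have hb : b ≠ 0 := fun hb => hab ⟨ha, hb⟩
    refine ⟨0, fun t ht t' ht' h => ?_⟩
    have h1 := hline t ht
    have h2 := hline t' ht'
    rw [ha] at h1 h2
    have h3 : b * t 1 = b * t' 1 := by linarith
    have h4 : t 1 = t' 1 := mul_left_cancel₀ hb h3
    funext i; fin_cases i
    · exact h
    · exact h4
  · refine ⟨1, fun t ht t' ht' h => ?_⟩
    have h1 := hline t ht
    have h2 := hline t' ht'
    have h3 : a * t 0 = a * t' 0 := by rw [h] at h1; linarith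
    have h4 : t 0 = t' 0 := mul_left_cancel₀ ha h3
    funext i; fin_cases i
    · exact h4
    · exact h



/-- If `Y_n` is `Π_n`-poised, `K = V(k)` is a line with
`Y_n ∩ K = ∅`, and `Y_{n+1}` is obtained by adding `n+2` distinct points of `K`,
then `Y_{n+1}` is `Π_{n+1}`-poised. -/
theorem stmt7 (n : ℕ) (Y T : Finset Pt) (k : BPoly) (hk : k.totalDegree = 1)
    (hY : Poised n Y)
    (hYK : ∀ y ∈ Y, eval y k ≠ 0)
    (hT : ∀ t ∈ T, eval t k = 0)
    (hTcard : T.card = n + 2) :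
    Poised (n + 1) (Y ∪ T) := by

  classical
  intro f
  obtain ⟨c, a, b, hab, hkd⟩ := kform k hk
  obtain ⟨j, hinj⟩ := line_inj k c a b hab hkd T hT
  have hTne : T.Nonempty := by rw [← Finset.card_pos, hTcard]; omega
  obtain ⟨qT, hqTdeg, hqTval⟩ := interp_coord T j hinj f hTne
  rw [hTcard] at hqTdeg
  obtain ⟨r, ⟨hrmem, hrval⟩, -⟩ := hY (fun y => (f y - eval y qT) / eval y k)
  have hrdeg : r.totalDegree ≤ n := (mem_restrictTotalDegree _ _ _).mp hrmem
  set p := qT + k * r with hp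
  have hpdeg : p ∈ PiLE (n + 1) := by
    rw [PiLE, mem_restrictTotalDegree]
    apply (totalDegree_add _ _).trans
    apply max_le
    · omega
    · apply (totalDegree_mul _ _).trans
      omega
  have hpval : ∀ y ∈ Y ∪ T, eval y p = f y := by
    intro y hy
    rcases Finset.mem_union.mp hy with hy | hy
    · have hky := hYK y hy
      simp only [hp, map_add, map_mul]
      rw [hrval y hy]
      field_simp
      ring
    · simp only [hp, map_add, map_mul]
      rw [hT y hy, hqTval y hy]
      ring
  refine ⟨p, ⟨hpdeg, hpval⟩, ?_⟩
  rintro p' ⟨hp'mem, hp'val⟩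
  have hd : (p' - p) ∈ PiLE (n + 1) := Submodule.sub_mem _ hp'mem hpdeg
  have hddeg : (p' - p).totalDegree ≤ n + 1 := (mem_restrictTotalDegree _ _ _).mp hd
  have hdT : ∀ t ∈ T, eval t (p' - p) = 0 := by
    intro t ht
    rw [map_sub, hp'val t (Finset.mem_union_right Y ht), hpval t (Finset.mem_union_right Y ht),
      sub_self]
  obtain ⟨q, hq⟩ := factor_general k hk T hT (p' - p) (by omega) hdT
  have hkne : k ≠ 0 := by
    intro h0
    rw [h0] at hk
    simp at hk
  have hqdeg : q.totalDegree ≤ n := by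
    rcases eq_or_ne q 0 with hq0 | hq0
    · simp [hq0]
    · have h1 := totalDegree_mul_eq' hkne hq0
      rw [← hq, hk] at h1
      omega
  have hqY : ∀ y ∈ Y, eval y q = 0 := by
    intro y hy
    have h1 : eval y (p' - p) = 0 := by
      rw [map_sub, hp'val y (Finset.mem_union_left T hy), hpval y (Finset.mem_union_left T hy),
        sub_self]
    rw [hq, map_mul] at h1
    exact (mul_eq_zero.mp h1).resolve_left (hYK y hy)
  have hzero : q = 0 := by
    have huniq := hY 0
    exact huniq.unique ⟨(mem_restrictTotalDegree _ _ _).mpr hqdeg, fun y hy => by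
        rw [hqY y hy]; rfl⟩
      ⟨Submodule.zero_mem _, fun y hy => by simp⟩
  rw [hzero, mul_zero] at hq
  exact sub_eq_zero.mp hq
end
end

section
/- Let n ≥ 1 and let Y_n ⊂ ℝ² be a GC_n set, i.e., a Π_n-poised set each of whose fundamental polynomials ℓ_{y,Y_n} is a product of polynomials of degree 1. Choose z ∈ ℝ² with ℓ_{y,Y_n}(z) ≠ 0 for all y ∈ Y_n, and set L := ∪_{y∈Y_n} {m ∈ Π : deg m = 1, m divides ℓ_{y,Y_n}, m(z) = 1}. Let Y_{n−1} be any Π_{n−1}-poised subset of Y_n and T := Y_n \ Y_{n−1}. Then the set ∪_{t∈T} {m(x)·ℓ_{t,Y_n}(x) : m ∈ L, m(t) = 0} spans the vector space Π_{n+1} ∩ I(Y_n) and contains an H-basis of the ideal I(Y_n) all of whose elements are products of polynomials of degree 1. -/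
open MvPolynomial

noncomputable section

/-- The candidate set of products `m · ℓ_{t,Y_n}` with `m` a normalized linear
factor of some fundamental polynomial vanishing at `t ∈ T = Y_n \ Y_{n-1}`. -/
def gcSet (Y Y' : Finset Pt) (z : Pt) (ell : Pt → BPoly) : Set BPoly :=
  {p | ∃ t ∈ Y \ Y', ∃ m : BPoly,
    m.totalDegree = 1 ∧ eval z m = 1 ∧ (∃ y ∈ Y, m ∣ ell y) ∧
    eval t m = 0 ∧ p = m * ell t}

namespace Stmt19Aux

open Finsupp

lemma dsum_eq (d : Fin 2 →₀ ℕ) : (d.sum fun _ e => e) = d.degree := rfl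

lemma totalDegree_le_iff' {p : BPoly} {n : ℕ} :
    p.totalDegree ≤ n ↔ ∀ d ∈ p.support, d.degree ≤ n := by
  rw [totalDegree, Finset.sup_le_iff]
  simp only [dsum_eq]

lemma top_ne_zero {p : BPoly} (hp : p ≠ 0) :
    homogeneousComponent p.totalDegree p ≠ 0 := by
  obtain ⟨d, hd, hdeg⟩ := Finset.exists_mem_eq_sup p.support
    (support_nonempty.mpr hp) (fun m : Fin 2 →₀ ℕ => m.sum fun _ e => e)
  intro h
  have hc := coeff_homogeneousComponent (n := p.totalDegree) (φ := p) d
  rw [h] at hc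
  have hdd : d.degree = totalDegree p := hdeg.symm
  rw [coeff_zero, if_pos hdd] at hc
  exact (MvPolynomial.mem_support_iff.mp hd) hc.symm

lemma coeff_sub_top {p : BPoly} {n : ℕ} (hp : p.totalDegree ≤ n) {d : Fin 2 →₀ ℕ}
    (hd : n ≤ d.degree) : coeff d (p - homogeneousComponent n p) = 0 := by
  rcases eq_or_lt_of_le hd with h | h
  · rw [coeff_sub, coeff_homogeneousComponent, if_pos h.symm, sub_self]
  · have hz : coeff d p = 0 := by
      apply coeff_eq_zero_of_totalDegree_lt
      exact lt_of_le_of_lt hp h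
    rw [coeff_sub, coeff_homogeneousComponent, if_neg (by omega), hz, sub_zero]

lemma sub_top_lt {p : BPoly} {n : ℕ} (hp : p.totalDegree ≤ n) :
    p - homogeneousComponent n p = 0 ∨ (p - homogeneousComponent n p).totalDegree < n := by
  rcases eq_or_ne (p - homogeneousComponent n p) 0 with h | h
  · exact Or.inl h
  · right
    have hb : ∀ d ∈ (p - homogeneousComponent n p).support, d.degree < n := by
      intro d hd
      by_contra hh
      push_neg at hh
      exact (MvPolynomial.mem_support_iff.mp hd) (coeff_sub_top hp hh)
    obtain ⟨d, hd, hdeg⟩ := Finset.exists_mem_eq_sup _ (support_nonempty.mpr h)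
      (fun m : Fin 2 →₀ ℕ => m.sum fun _ e => e)
    rw [totalDegree, hdeg, dsum_eq]
    exact hb d hd

end Stmt19Aux
namespace Stmt19Aux

lemma totalDegree_le_pred {p : BPoly} {n : ℕ} (hp : p.totalDegree ≤ n + 1)
    (h0 : homogeneousComponent (n + 1) p = 0) : p.totalDegree ≤ n := by
  rw [totalDegree_le_iff'] at hp ⊢
  intro d hd
  have h1 := hp d hd
  rcases eq_or_lt_of_le h1 with h | h
  · exfalso
    have hc := coeff_homogeneousComponent (n := n + 1) (φ := p) d
    rw [h0, coeff_zero, if_pos h] at hc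
    exact (MvPolynomial.mem_support_iff.mp hd) hc.symm
  · omega

lemma homogComp_mul {k j : ℕ} {w q : BPoly} (hw : w.IsHomogeneous k) (hq : q.totalDegree ≤ j) :
    homogeneousComponent (k + j) (w * q) = w * homogeneousComponent j q := by
  have hQ : (homogeneousComponent j q).IsHomogeneous j := homogeneousComponent_isHomogeneous j q
  have h1 : (w * homogeneousComponent j q).IsHomogeneous (k + j) := hw.mul hQ
  have hsplit : w * q = w * homogeneousComponent j q + w * (q - homogeneousComponent j q) := by
    ring
  have hz : homogeneousComponent (k + j) (w * (q - homogeneousComponent j q)) = 0 := by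
    rcases sub_top_lt hq with h | h
    · rw [h, mul_zero, map_zero]
    · apply homogeneousComponent_eq_zero
      calc (w * (q - homogeneousComponent j q)).totalDegree
          ≤ w.totalDegree + (q - homogeneousComponent j q).totalDegree := totalDegree_mul _ _
        _ < k + j := by
            have := hw.totalDegree_le
            omega
  rw [hsplit, map_add, hz, add_zero,
    homogeneousComponent_of_mem ((mem_homogeneousSubmodule _ _).mpr h1), if_pos rfl]

lemma le_totalDegree_mul {p q : BPoly} (hp : p ≠ 0) (hq : q ≠ 0) :
    p.totalDegree + q.totalDegree ≤ (p * q).totalDegree := by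
  have hPQ : homogeneousComponent (p.totalDegree + q.totalDegree) (p * q)
      = homogeneousComponent p.totalDegree p * homogeneousComponent q.totalDegree q := by
    have hsplit : p * q = homogeneousComponent p.totalDegree p * q + (p - homogeneousComponent p.totalDegree p) * q := by
      ring
    have hz : homogeneousComponent (p.totalDegree + q.totalDegree) ((p - homogeneousComponent p.totalDegree p) * q) = 0 := by
      rcases sub_top_lt (le_refl p.totalDegree) with h | h
      · rw [h, zero_mul, map_zero]
      · apply homogeneousComponent_eq_zero
        calc ((p - homogeneousComponent p.totalDegree p) * q).totalDegree
            ≤ (p - homogeneousComponent p.totalDegree p).totalDegree + q.totalDegree := totalDegree_mul _ _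
          _ < p.totalDegree + q.totalDegree := by omega
    rw [hsplit, map_add, hz, add_zero,
      homogComp_mul (homogeneousComponent_isHomogeneous p.totalDegree p) (le_refl q.totalDegree)]
  have hne : homogeneousComponent (p.totalDegree + q.totalDegree) (p * q) ≠ 0 := by
    rw [hPQ]
    exact mul_ne_zero (top_ne_zero hp) (top_ne_zero hq)
  by_contra hcon
  push_neg at hcon
  exact hne (homogeneousComponent_eq_zero _ _ hcon)

lemma homogComp_line_mul {q : BPoly} {n : ℕ} (hq : q.totalDegree ≤ n) (i : Fin 2) (c : ℝ) :
    homogeneousComponent (n + 1) ((X i - C c) * q) = X i * homogeneousComponent n q := by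
  have h1 : (X i - C c) * q = X i * q - C c * q := by ring
  have h2 : homogeneousComponent (n + 1) (X i * q) = X i * homogeneousComponent n q := by
    have := homogComp_mul (k := 1) (j := n) (w := (X i : BPoly)) (isHomogeneous_X _ _) hq
    rwa [add_comm 1 n] at this
  rw [h1, map_sub, h2, homogeneousComponent_C_mul,
    homogeneousComponent_eq_zero _ _ (lt_of_le_of_lt hq (Nat.lt_succ_self n)), mul_zero, sub_zero]

end Stmt19Aux
namespace Stmt19Aux

lemma degree2 (d : Fin 2 →₀ ℕ) : d.degree = d 0 + d 1 := by
  have h : d.degree = ∑ i : Fin 2, d i := by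
    rw [Finsupp.degree]
    apply Finset.sum_subset (Finset.subset_univ _)
    intro x _ hx
    exact Finsupp.notMem_support_iff.mp hx
  rw [h, Fin.sum_univ_two]

lemma fin2_eq_iff {d : Fin 2 →₀ ℕ} {a b : ℕ} (h0 : d 0 = a) (h1 : d 1 = b) :
    d = Finsupp.single 0 a + Finsupp.single 1 b := by
  ext i
  fin_cases i <;> simp [Finsupp.single_apply, h0, h1]

lemma fin2_cases {d : Fin 2 →₀ ℕ} (h : d.degree ≤ 1) :
    d = 0 ∨ d = Finsupp.single 0 1 ∨ d = Finsupp.single 1 1 := by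
  rw [degree2] at h
  rcases Nat.le_one_iff_eq_zero_or_eq_one.mp h with h' | h'
  · left
    have h0 : d 0 = 0 := by omega
    have h1 : d 1 = 0 := by omega
    have := fin2_eq_iff h0 h1
    simpa using this
  · rcases Nat.eq_zero_or_pos (d 0) with h0 | h0
    · right; right
      have := fin2_eq_iff h0 (show d 1 = 1 by omega)
      simpa using this
    · right; left
      have := fin2_eq_iff (show d 0 = 1 by omega) (show d 1 = 0 by omega)
      simpa using this

lemma lin_eq {a : BPoly} (h : a.totalDegree ≤ 1) :
    a = C (coeff 0 a) + C (coeff (Finsupp.single 0 1) a) * X 0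
      + C (coeff (Finsupp.single 1 1) a) * X 1 := by
  classical
  apply MvPolynomial.ext
  intro d
  rw [coeff_add, coeff_add, coeff_C, coeff_C_mul, coeff_C_mul, coeff_X', coeff_X']
  by_cases hd : d ∈ a.support
  · have hdeg := totalDegree_le_iff'.mp h d hd
    rcases fin2_cases hdeg with h' | h' | h'
    · subst h'
      have h01 : ¬ (Finsupp.single (0 : Fin 2) 1 = 0) := by simp
      have h11 : ¬ (Finsupp.single (1 : Fin 2) 1 = 0) := by simp
      simp [h01, h11]
    · subst h'
      have e1 : ¬ ((Finsupp.single (0 : Fin 2) 1) = (0 : Fin 2 →₀ ℕ)) := by simp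
      have e2 : ¬ (Finsupp.single (1 : Fin 2) 1 = Finsupp.single (0 : Fin 2) 1) := by
        intro hcon
        have := DFunLike.congr_fun hcon 1
        simp [Finsupp.single_apply] at this
      simp [if_neg e1, e2]
      intro hcon
      exact absurd hcon.symm e1
    · subst h'
      have e1 : ¬ ((Finsupp.single (1 : Fin 2) 1) = (0 : Fin 2 →₀ ℕ)) := by simp
      have e2 : ¬ (Finsupp.single (0 : Fin 2) 1 = Finsupp.single (1 : Fin 2) 1) := by
        intro hcon
        have := DFunLike.congr_fun hcon 0
        simp [Finsupp.single_apply] at this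
      simp [e1, e2]
      intro hcon
      exact absurd hcon.symm e1
  · have hc : coeff d a = 0 := by
      rwa [MvPolynomial.mem_support_iff, not_not] at hd
    rw [hc]
    by_cases h0 : d = 0
    · subst h0
      have : coeff (0 : Fin 2 →₀ ℕ) a = 0 := hc
      rw [if_pos rfl]
      have e1 : ¬ (Finsupp.single (0 : Fin 2) 1 = (0 : Fin 2 →₀ ℕ)) := by simp
      have e2 : ¬ (Finsupp.single (1 : Fin 2) 1 = (0 : Fin 2 →₀ ℕ)) := by simp
      rw [if_neg e1, if_neg e2]
      simp [this]
    · rw [if_neg (show ¬((0 : Fin 2 →₀ ℕ) = d) from fun hh => h0 hh.symm)]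
      by_cases h1 : Finsupp.single (0 : Fin 2) 1 = d
      · rw [if_pos h1]
        have hc1 : coeff (Finsupp.single (0 : Fin 2) 1) a = 0 := by rw [h1]; exact hc
        rw [hc1]
        by_cases h2 : Finsupp.single (1 : Fin 2) 1 = d
        · rw [if_pos h2]
          have hc2 : coeff (Finsupp.single (1 : Fin 2) 1) a = 0 := by rw [h2]; exact hc
          rw [hc2]; ring
        · rw [if_neg h2]; ring
      · rw [if_neg h1]
        by_cases h2 : Finsupp.single (1 : Fin 2) 1 = d
        · rw [if_pos h2]
          have hc2 : coeff (Finsupp.single (1 : Fin 2) 1) a = 0 := by rw [h2]; exact hc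
          rw [hc2]; ring
        · rw [if_neg h2]; ring

end Stmt19Aux
namespace Stmt19Aux

lemma eval_smul' (t : Pt) (c : ℝ) (p : BPoly) : eval t (c • p) = c * eval t p := by
  rw [smul_eq_C_mul, map_mul, eval_C]

lemma line_through_zero {t : Pt} {a : BPoly} (h1 : a.totalDegree ≤ 1) (h0 : eval t a = 0) :
    a = (coeff (Finsupp.single 0 1) a) • (X 0 - C (t 0))
      + (coeff (Finsupp.single 1 1) a) • (X 1 - C (t 1)) := by
  have hexp := lin_eq h1
  have he : coeff 0 a + coeff (Finsupp.single 0 1) a * t 0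
      + coeff (Finsupp.single 1 1) a * t 1 = 0 := by
    have := congrArg (eval t) hexp
    rw [h0] at this
    simp only [map_add, map_mul, eval_C, eval_X] at this
    linarith [this.symm]
  have hc : coeff 0 a = -(coeff (Finsupp.single 0 1) a * t 0
      + coeff (Finsupp.single 1 1) a * t 1) := by linarith
  calc a = C (coeff 0 a) + C (coeff (Finsupp.single 0 1) a) * X 0
        + C (coeff (Finsupp.single 1 1) a) * X 1 := hexp
    _ = _ := by
        rw [hc, smul_eq_C_mul, smul_eq_C_mul]
        push_cast [map_neg, map_add, map_mul]
        ring

lemma span_two_lines {t z : Pt} {m₁ m₂ : BPoly}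
    (h₁ : m₁.totalDegree ≤ 1) (ht₁ : eval t m₁ = 0) (hz₁ : eval z m₁ = 1)
    (h₂ : m₂.totalDegree ≤ 1) (ht₂ : eval t m₂ = 0) (hz₂ : eval z m₂ = 1)
    (hne : m₁ ≠ m₂)
    {a : BPoly} (ha : a.totalDegree ≤ 1) (hta : eval t a = 0) :
    ∃ α β : ℝ, a = α • m₁ + β • m₂ := by
  set u0 : BPoly := X 0 - C (t 0) with hu0
  set u1 : BPoly := X 1 - C (t 1) with hu1
  set p1 := coeff (Finsupp.single 0 1) m₁
  set q1 := coeff (Finsupp.single 1 1) m₁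
  set p2 := coeff (Finsupp.single 0 1) m₂
  set q2 := coeff (Finsupp.single 1 1) m₂
  set a1 := coeff (Finsupp.single 0 1) a
  set a2 := coeff (Finsupp.single 1 1) a
  have hm1 : m₁ = p1 • u0 + q1 • u1 := line_through_zero h₁ ht₁
  have hm2 : m₂ = p2 • u0 + q2 • u1 := line_through_zero h₂ ht₂
  have hadec : a = a1 • u0 + a2 • u1 := line_through_zero ha hta
  have hD : p1 * q2 - p2 * q1 ≠ 0 := by
    intro hD
    have e1 : q2 • m₁ - q1 • m₂ = (q2 * p1 - q1 * p2) • u0 := by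
      rw [hm1, hm2, smul_add, smul_add, smul_smul, smul_smul, smul_smul, smul_smul, sub_smul]
      module
    have e2 : p2 • m₁ - p1 • m₂ = (p2 * q1 - p1 * q2) • u1 := by
      rw [hm1, hm2]
      rw [smul_add, smul_add, smul_smul, smul_smul, smul_smul, smul_smul, sub_smul]
      module
    have hz0 : (q2 * p1 - q1 * p2 : ℝ) = 0 := by linarith
    have hz1' : (p2 * q1 - p1 * q2 : ℝ) = 0 := by linarith
    rw [hz0, zero_smul] at e1
    rw [hz1', zero_smul] at e2
    have f1 : q2 * 1 - q1 * 1 = (0:ℝ) := by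
      have := congrArg (eval z) e1
      simp only [map_sub, eval_smul', hz₁, hz₂, map_zero] at this
      linarith [this]
    have f2 : p2 * 1 - p1 * 1 = (0:ℝ) := by
      have := congrArg (eval z) e2
      simp only [map_sub, eval_smul', hz₁, hz₂, map_zero] at this
      linarith [this]
    have hq : q1 = q2 := by linarith
    have hp : p1 = p2 := by linarith
    apply hne
    rw [hm1, hm2, hp, hq]
  refine ⟨(a1 * q2 - a2 * p2) / (p1 * q2 - p2 * q1),
          (a2 * p1 - a1 * q1) / (p1 * q2 - p2 * q1), ?_⟩
  have s1 : (a1 * q2 - a2 * p2) / (p1 * q2 - p2 * q1) * p1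
      + (a2 * p1 - a1 * q1) / (p1 * q2 - p2 * q1) * p2 = a1 := by
    rw [div_mul_eq_mul_div, div_mul_eq_mul_div, ← add_div, div_eq_iff hD]
    ring
  have s2 : (a1 * q2 - a2 * p2) / (p1 * q2 - p2 * q1) * q1
      + (a2 * p1 - a1 * q1) / (p1 * q2 - p2 * q1) * q2 = a2 := by
    rw [div_mul_eq_mul_div, div_mul_eq_mul_div, ← add_div, div_eq_iff hD]
    ring
  rw [hadec, hm1, hm2]
  have hcollect : ((a1 * q2 - a2 * p2) / (p1 * q2 - p2 * q1)) • (p1 • u0 + q1 • u1)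
      + ((a2 * p1 - a1 * q1) / (p1 * q2 - p2 * q1)) • (p2 • u0 + q2 • u1)
      = ((a1 * q2 - a2 * p2) / (p1 * q2 - p2 * q1) * p1
          + (a2 * p1 - a1 * q1) / (p1 * q2 - p2 * q1) * p2) • u0
        + ((a1 * q2 - a2 * p2) / (p1 * q2 - p2 * q1) * q1
          + (a2 * p1 - a1 * q1) / (p1 * q2 - p2 * q1) * q2) • u1 := by
    module
  rw [hcollect, s1, s2]

end Stmt19Aux
namespace Stmt19Aux

lemma mem_PiLE {n : ℕ} {p : BPoly} : p ∈ PiLE n ↔ p.totalDegree ≤ n :=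
  MvPolynomial.mem_restrictTotalDegree _ _ p

lemma poised_zero {n : ℕ} {Y : Finset Pt} (hY : Poised n Y) {p : BPoly}
    (hp : p ∈ PiLE n) (h0 : ∀ y ∈ Y, eval y p = 0) : p = 0 := by
  obtain ⟨q, _, huniq⟩ := hY (fun _ => 0)
  have h1 := huniq p ⟨hp, fun y hy => h0 y hy⟩
  have h2 := huniq 0 ⟨Submodule.zero_mem _, fun y _ => by simp⟩
  rw [h1, h2]

lemma poised_interp {n : ℕ} {Y : Finset Pt} (hY : Poised n Y) (f : Pt → ℝ) :
    ∃ p ∈ PiLE n, ∀ y ∈ Y, eval y p = f y := by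
  obtain ⟨p, hp, _⟩ := hY f
  exact ⟨p, hp.1, hp.2⟩

lemma factor_through {Y : Finset Pt} {ell : Pt → BPoly} {z : Pt}
    (hGC : ∀ y ∈ Y, ∃ s : Multiset BPoly, (∀ m ∈ s, totalDegree m = 1) ∧ ell y = s.prod)
    (hz : ∀ y ∈ Y, eval z (ell y) ≠ 0)
    {t : Pt} {y : Pt} (hy : y ∈ Y) (h0 : eval t (ell y) = 0) :
    ∃ m : BPoly, m.totalDegree = 1 ∧ eval z m = 1 ∧ m ∣ ell y ∧ eval t m = 0 := by
  obtain ⟨s, hs1, hs2⟩ := hGC y hy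
  have hprod : ∀ w : Pt, eval w (ell y) = (s.map (eval w)).prod := by
    intro w; rw [hs2]; exact map_multiset_prod (eval w) s
  have h0' : (0 : ℝ) ∈ s.map (eval t) := by
    rw [← Multiset.prod_eq_zero_iff, ← hprod t]
    exact h0
  obtain ⟨m₀, hm₀s, hm₀t⟩ := Multiset.mem_map.mp h0'
  have hz0 : eval z m₀ ≠ 0 := by
    intro hcon
    apply hz y hy
    rw [hprod z]
    apply Multiset.prod_eq_zero
    rw [← hcon]
    exact Multiset.mem_map_of_mem _ hm₀s
  have hrec : m₀ = (eval z m₀) • ((eval z m₀)⁻¹ • m₀) := by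
    rw [smul_smul, mul_inv_cancel₀ hz0, one_smul]
  refine ⟨(eval z m₀)⁻¹ • m₀, ?_, ?_, ?_, ?_⟩
  · apply le_antisymm
    · exact (totalDegree_smul_le _ _).trans (hs1 m₀ hm₀s).le
    · calc 1 = m₀.totalDegree := (hs1 m₀ hm₀s).symm
        _ = ((eval z m₀) • ((eval z m₀)⁻¹ • m₀)).totalDegree := by rw [← hrec]
        _ ≤ ((eval z m₀)⁻¹ • m₀).totalDegree := totalDegree_smul_le _ _
  · rw [eval_smul', inv_mul_cancel₀ hz0]
  · have hd : ((eval z m₀)⁻¹ • m₀) * C (eval z m₀) = m₀ := by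
      rw [smul_eq_C_mul, show C (eval z m₀)⁻¹ * m₀ * C (eval z m₀)
        = (C (eval z m₀)⁻¹ * C (eval z m₀)) * m₀ from by ring, ← map_mul,
        inv_mul_cancel₀ hz0, map_one, one_mul]
    exact Dvd.dvd.trans ⟨C (eval z m₀), hd.symm⟩ (hs2 ▸ Multiset.dvd_prod hm₀s)
  · rw [eval_smul', hm₀t, mul_zero]

end Stmt19Aux
namespace Stmt19Aux

lemma deg_line_le (i : Fin 2) (c : ℝ) : ((X i - C c : BPoly)).totalDegree ≤ 1 := by
  refine (totalDegree_sub _ _).trans ?_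
  simp [totalDegree_X, totalDegree_C]

lemma line_exists {t y' : Pt} (hne : y' ≠ t) :
    ∃ a : BPoly, a.totalDegree ≤ 1 ∧ eval t a = 0 ∧ eval y' a = 0 ∧ a ≠ 0 := by
  refine ⟨C (y' 0 - t 0) * (X 1 - C (t 1)) - C (y' 1 - t 1) * (X 0 - C (t 0)),
    ?_, by simp, by simp; ring, ?_⟩
  · refine (totalDegree_sub _ _).trans ?_
    refine max_le ?_ ?_ <;>
    · refine (totalDegree_mul _ _).trans ?_
      rw [totalDegree_C, zero_add]
      exact deg_line_le _ _
  · intro hcon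
    have hw : eval (fun j : Fin 2 => if j = 0 then t 0 - (y' 1 - t 1) else t 1 + (y' 0 - t 0))
        (C (y' 0 - t 0) * (X 1 - C (t 1)) - C (y' 1 - t 1) * (X 0 - C (t 0)) : BPoly)
        = (y' 0 - t 0) ^ 2 + (y' 1 - t 1) ^ 2 := by
      simp
      ring
    rw [hcon, map_zero] at hw
    have hy : y' 0 - t 0 = 0 ∧ y' 1 - t 1 = 0 := by
      constructor <;> nlinarith [sq_nonneg (y' 0 - t 0), sq_nonneg (y' 1 - t 1)]
    apply hne
    funext j
    fin_cases j
    · have := hy.1; simpa using by linarith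
    · have := hy.2; simpa using by linarith

end Stmt19Aux
namespace Stmt19Aux

lemma poised_nonempty {k : ℕ} {Z : Finset Pt} (hZ : Poised k Z) : Z.Nonempty := by
  rcases Finset.eq_empty_or_nonempty Z with h | h
  · exfalso
    obtain ⟨p, _, huniq⟩ := hZ (fun _ => 0)
    have h1 := huniq 1 ⟨mem_PiLE.mpr (by rw [totalDegree_one]; exact Nat.zero_le _),
      by simp [h]⟩
    have h2 := huniq 0 ⟨Submodule.zero_mem _, by simp [h]⟩
    exact one_ne_zero (h1.trans h2.symm)
  · exact h

lemma second_point {n : ℕ} {Y Y' : Finset Pt} (hn : 1 ≤ n) (hY : Poised n Y)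
    (hY' : Poised (n - 1) Y') {t : Pt} (htY' : t ∉ Y')
    (hall : ∀ t' ∈ Y, t' ∉ Y' → t' = t) : False := by
  classical
  obtain ⟨y0, hy0⟩ := poised_nonempty hY'
  have hy0t : y0 ≠ t := fun (h : y0 = t) => htY' (h ▸ hy0)
  obtain ⟨a, ha1, hat, hay0, hane⟩ := line_exists hy0t
  obtain ⟨p, hp, hpinterp⟩ := poised_interp hY' (fun y => if eval y a = 0 then 1 else 0)
  have hpne : p ≠ 0 := by
    intro h
    have h2 := hpinterp y0 hy0
    rw [h, map_zero, if_pos hay0] at h2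
    norm_num at h2
  have hq : a * p = 0 := by
    apply poised_zero hY
    · rw [mem_PiLE]
      refine (totalDegree_mul _ _).trans ?_
      have := mem_PiLE.mp hp
      omega
    · intro y hy
      by_cases hy' : y ∈ Y'
      · rw [map_mul]
        by_cases h0 : eval y a = 0
        · rw [h0, zero_mul]
        · rw [hpinterp y hy', if_neg h0, mul_zero]
      · rw [hall y hy hy', map_mul, hat, zero_mul]
  exact mul_ne_zero hane hpne hq

lemma two_lines {n : ℕ} {Y Y' : Finset Pt} {ell : Pt → BPoly} {z : Pt}
    (hn : 1 ≤ n) (hY : Poised n Y) (hell : IsFundamental n Y ell)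
    (hGC : ∀ y ∈ Y, ∃ s : Multiset BPoly, (∀ m ∈ s, totalDegree m = 1) ∧ ell y = s.prod)
    (hz : ∀ y ∈ Y, eval z (ell y) ≠ 0)
    (hY'sub : Y' ⊆ Y) (hY' : Poised (n - 1) Y')
    {t : Pt} (htY : t ∈ Y) (htY' : t ∉ Y') :
    ∃ m₁, (m₁.totalDegree = 1 ∧ eval z m₁ = 1 ∧ (∃ y ∈ Y, m₁ ∣ ell y) ∧ eval t m₁ = 0) ∧
    ∃ m₂, (m₂.totalDegree = 1 ∧ eval z m₂ = 1 ∧ (∃ y ∈ Y, m₂ ∣ ell y) ∧ eval t m₂ = 0) ∧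
      m₁ ≠ m₂ := by
  classical
  by_contra hcon
  push_neg at hcon
  obtain ⟨t', ht'Y, ht'Y', ht'ne⟩ : ∃ t', t' ∈ Y ∧ t' ∉ Y' ∧ t' ≠ t := by
    by_contra hno
    exact second_point hn hY hY' htY' (fun u hu hu' => by
      by_contra hne
      exact hno ⟨u, hu, hu', hne⟩)
  have h0 : eval t (ell t') = 0 := by
    rw [(hell t' ht'Y).2 t htY, if_neg (fun (h : t = t') => ht'ne h.symm)]
  obtain ⟨m, hm1, hmz, hmdvd, hmt⟩ := factor_through hGC hz ht'Y h0
  have hmP : m.totalDegree = 1 ∧ eval z m = 1 ∧ (∃ y ∈ Y, m ∣ ell y) ∧ eval t m = 0 :=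
    ⟨hm1, hmz, ⟨t', ht'Y, hmdvd⟩, hmt⟩
  have huniqline : ∀ m', (m'.totalDegree = 1 ∧ eval z m' = 1 ∧ (∃ y ∈ Y, m' ∣ ell y) ∧
      eval t m' = 0) → m' = m := by
    intro m' hm'
    by_contra hne
    exact hne (hcon m' hm' m hmP)
  have hkey : ∀ y ∈ Y, y ≠ t → eval y m ≠ 0 := by
    intro y hy hyt hy0
    have h0y : eval t (ell y) = 0 := by
      rw [(hell y hy).2 t htY, if_neg (fun (h : t = y) => hyt h.symm)]
    obtain ⟨m'', hd1, hd2, hd3, hd4⟩ := factor_through hGC hz hy h0y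
    have heq : m'' = m := huniqline m'' ⟨hd1, hd2, ⟨y, hy, hd3⟩, hd4⟩
    rw [heq] at hd3
    obtain ⟨r, hr⟩ := hd3
    have hone : eval y (ell y) = 1 := by rw [(hell y hy).2 y hy, if_pos rfl]
    rw [hr, map_mul, hy0, zero_mul] at hone
    norm_num at hone
  obtain ⟨q, hq⟩ := hmdvd
  have ht'one : eval t' (ell t') = 1 := by rw [(hell t' ht'Y).2 t' ht'Y, if_pos rfl]
  have hqne : q ≠ 0 := by
    intro h
    rw [hq, h, mul_zero, map_zero] at ht'one
    norm_num at ht'one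
  have hmne : m ≠ 0 := by
    intro h
    rw [h, totalDegree_zero] at hm1
    norm_num at hm1
  have hqdeg : q.totalDegree ≤ n - 1 := by
    by_contra hd
    push_neg at hd
    have hlow := le_totalDegree_mul hmne hqne
    have hdeg' : (ell t').totalDegree ≤ n := mem_PiLE.mp (hell t' ht'Y).1
    rw [hq] at hdeg'
    rw [hm1] at hlow
    omega
  have hqvanish : ∀ y' ∈ Y', eval y' q = 0 := by
    intro y' hy'
    have hy'Y : y' ∈ Y := hY'sub hy'
    have hy't : y' ≠ t := fun (h : y' = t) => htY' (h ▸ hy')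
    have h1 : eval y' (ell t') = 0 := by
      rw [(hell t' ht'Y).2 y' hy'Y, if_neg (fun (h : y' = t') => ht'Y' (h ▸ hy'))]
    rw [hq, map_mul] at h1
    rcases mul_eq_zero.mp h1 with h | h
    · exact absurd h (hkey y' hy'Y hy't)
    · exact h
  exact hqne (poised_zero hY' (mem_PiLE.mpr hqdeg) hqvanish)

end Stmt19Aux
namespace Stmt19Aux

lemma mem_vIdeal {Ys : Set Pt} {p : BPoly} : p ∈ vIdeal Ys ↔ ∀ y ∈ Ys, eval y p = 0 :=
  Iff.rfl

lemma mem_vSub {Ys : Set Pt} {p : BPoly} : p ∈ vSub Ys ↔ ∀ y ∈ Ys, eval y p = 0 :=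
  Iff.rfl

lemma gcSet_mem_W {n : ℕ} {Y Y' : Finset Pt} {ell : Pt → BPoly} {z : Pt}
    (hell : IsFundamental n Y ell) :
    ∀ p ∈ gcSet Y Y' z ell, p ∈ PiLE (n + 1) ⊓ vSub (Y : Set Pt) := by
  rintro p ⟨t, ht, m, hm1, hmz, hmdvd, hmt, rfl⟩
  have htY : t ∈ Y := (Finset.mem_sdiff.mp ht).1
  rw [Submodule.mem_inf]
  constructor
  · rw [mem_PiLE]
    refine (totalDegree_mul _ _).trans ?_
    have h2 := mem_PiLE.mp (hell t htY).1
    omega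
  · rw [mem_vSub]
    intro y hy
    have hyY : y ∈ Y := hy
    rw [map_mul]
    by_cases hyt : y = t
    · rw [hyt, hmt, zero_mul]
    · rw [(hell t htY).2 y hyY, if_neg hyt, mul_zero]

lemma span_ell_top {n : ℕ} {Y Y' : Finset Pt} {ell : Pt → BPoly}
    (hn : 1 ≤ n) (hY : Poised n Y) (hell : IsFundamental n Y ell)
    (hY'sub : Y' ⊆ Y) (hY' : Poised (n - 1) Y')
    {g : BPoly} (hg : g.IsHomogeneous n) :
    ∃ c : Pt → ℝ, g = ∑ t ∈ Y \ Y', c t • homogeneousComponent n (ell t) := by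
  classical
  obtain ⟨p', hp', hp'interp⟩ := poised_interp hY' (fun y => eval y g)
  set c : Pt → ℝ := fun t => eval t (g - p') with hc
  have key : g - (p' + ∑ t ∈ Y \ Y', c t • ell t) = 0 := by
    apply poised_zero hY
    · rw [mem_PiLE]
      have h1 : g.totalDegree ≤ n := hg.totalDegree_le
      have h2 : (p' + ∑ t ∈ Y \ Y', c t • ell t) ∈ PiLE n := by
        apply Submodule.add_mem
        · rw [mem_PiLE]
          have := mem_PiLE.mp hp'
          omega
        · apply Submodule.sum_mem
          intro t ht
          exact Submodule.smul_mem _ _ ((hell t ((Finset.mem_sdiff.mp ht).1)).1)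
      have h2' := mem_PiLE.mp h2
      refine (totalDegree_sub _ _).trans ?_
      omega
    · intro y hy
      rw [map_sub, map_add, map_sum]
      have hsum : ∀ t ∈ Y \ Y', eval y (c t • ell t) = c t * eval y (ell t) := by
        intro t _; rw [eval_smul']
      by_cases hy' : y ∈ Y'
      · have hzero : ∀ t ∈ Y \ Y', eval y (c t • ell t) = 0 := by
          intro t ht
          have ht' : t ∉ Y' := (Finset.mem_sdiff.mp ht).2
          have htY : t ∈ Y := (Finset.mem_sdiff.mp ht).1
          rw [hsum t ht, (hell t htY).2 y hy, if_neg (fun (h : y = t) => ht' (h ▸ hy')),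
            mul_zero]
        rw [Finset.sum_eq_zero hzero, add_zero, hp'interp y hy', sub_self]
      · have hyT : y ∈ Y \ Y' := Finset.mem_sdiff.mpr ⟨hy, hy'⟩
        have hsingle : ∑ t ∈ Y \ Y', eval y (c t • ell t) = c y := by
          rw [Finset.sum_eq_single_of_mem y hyT]
          · rw [eval_smul', (hell y hy).2 y hy, if_pos rfl, mul_one]
          · intro t ht hty
            have htY : t ∈ Y := (Finset.mem_sdiff.mp ht).1
            rw [eval_smul', (hell t htY).2 y hy, if_neg (fun (h : y = t) => hty h.symm), mul_zero]
        rw [hsingle, hc]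
        simp only [map_sub]
        ring
  have keyg : g = p' + ∑ t ∈ Y \ Y', c t • ell t := sub_eq_zero.mp key
  refine ⟨c, ?_⟩
  have := congrArg (homogeneousComponent n) keyg
  rw [map_add, map_sum] at this
  rw [homogeneousComponent_of_mem ((mem_homogeneousSubmodule _ _).mpr hg), if_pos rfl] at this
  rw [homogeneousComponent_eq_zero _ _ (show p'.totalDegree < n by
    have := mem_PiLE.mp hp'; omega)] at this
  rw [zero_add] at this
  rw [this]
  apply Finset.sum_congr rfl
  intro t _
  rw [map_smul]

end Stmt19Aux
namespace Stmt19Aux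

lemma homog_degree_eq {h : BPoly} {k : ℕ} (hh : h.IsHomogeneous k) {d : Fin 2 →₀ ℕ}
    (hd : d ∈ h.support) : d.degree = k := by
  rw [Finsupp.degree_eq_weight_one]
  exact hh (MvPolynomial.mem_support_iff.mp hd)

/-- The image of the span of `gcSet` under the top homogeneous component. -/
lemma top_mem_image {n : ℕ} {Y Y' : Finset Pt} {ell : Pt → BPoly} {z : Pt}
    (hn : 1 ≤ n) (hY : Poised n Y) (hell : IsFundamental n Y ell)
    (hGC : ∀ y ∈ Y, ∃ s : Multiset BPoly, (∀ m ∈ s, totalDegree m = 1) ∧ ell y = s.prod)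
    (hz : ∀ y ∈ Y, eval z (ell y) ≠ 0)
    (hY'sub : Y' ⊆ Y) (hY' : Poised (n - 1) Y')
    {h : BPoly} (hh : h.IsHomogeneous (n + 1)) :
    h ∈ Submodule.map (homogeneousComponent (n + 1))
      (Submodule.span ℝ (gcSet Y Y' z ell)) := by
  classical
  set Φ := Submodule.map (homogeneousComponent (n + 1)) (Submodule.span ℝ (gcSet Y Y' z ell))
    with hΦ
  -- step 1 : X i * (top of ell t) is in Φ for t ∈ Y \ Y'
  have sp1 : ∀ t ∈ Y \ Y', ∀ i : Fin 2, X i * homogeneousComponent n (ell t) ∈ Φ := by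
    intro t ht i
    have htY : t ∈ Y := (Finset.mem_sdiff.mp ht).1
    have htY' : t ∉ Y' := (Finset.mem_sdiff.mp ht).2
    obtain ⟨m₁, hm₁, m₂, hm₂, hne⟩ := two_lines hn hY hell hGC hz hY'sub hY' htY htY'
    have ha1 : ((X i - C (t i) : BPoly)).totalDegree ≤ 1 := deg_line_le i (t i)
    have ha0 : eval t (X i - C (t i) : BPoly) = 0 := by simp
    obtain ⟨α, β, hab⟩ := span_two_lines hm₁.1.le ((hm₁.2.2.2)) hm₁.2.1
      hm₂.1.le hm₂.2.2.2 hm₂.2.1 hne ha1 ha0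
    have hq1 : m₁ * ell t ∈ gcSet Y Y' z ell := ⟨t, ht, m₁, hm₁.1, hm₁.2.1, hm₁.2.2.1,
      hm₁.2.2.2, rfl⟩
    have hq2 : m₂ * ell t ∈ gcSet Y Y' z ell := ⟨t, ht, m₂, hm₂.1, hm₂.2.1, hm₂.2.2.1,
      hm₂.2.2.2, rfl⟩
    have hmem : (X i - C (t i)) * ell t ∈ Submodule.span ℝ (gcSet Y Y' z ell) := by
      rw [hab, add_mul, smul_mul_assoc, smul_mul_assoc]
      exact Submodule.add_mem _
        (Submodule.smul_mem _ _ (Submodule.subset_span hq1))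
        (Submodule.smul_mem _ _ (Submodule.subset_span hq2))
    have htop : homogeneousComponent (n + 1) ((X i - C (t i)) * ell t)
        = X i * homogeneousComponent n (ell t) :=
      homogComp_line_mul (mem_PiLE.mp (hell t htY).1) i (t i)
    exact ⟨_, hmem, htop⟩
  -- step 2 : X i * g for any g homogeneous of degree n
  have sp2 : ∀ g : BPoly, g.IsHomogeneous n → ∀ i : Fin 2, X i * g ∈ Φ := by
    intro g hg i
    obtain ⟨c, hcg⟩ := span_ell_top hn hY hell hY'sub hY' hg
    rw [hcg, Finset.mul_sum]
    apply Submodule.sum_mem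
    intro t ht
    rw [mul_smul_comm]
    exact Submodule.smul_mem _ _ (sp1 t ht i)
  -- step 3 : decompose h into monomials
  have hsum := as_sum h
  rw [hsum]
  apply Submodule.sum_mem
  intro d hd
  have hdeg : d.degree = n + 1 := homog_degree_eq hh hd
  have hdne : ∃ i : Fin 2, d i ≠ 0 := by
    by_contra hcon
    push_neg at hcon
    have := degree2 d
    rw [hcon 0, hcon 1] at this
    omega
  obtain ⟨i, hi⟩ := hdne
  have hle : Finsupp.single i 1 ≤ d := Finsupp.single_le_iff.mpr (by omega)
  have hsplit : Finsupp.single i 1 + (d - Finsupp.single i 1) = d :=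
    add_tsub_cancel_of_le hle
  have hmono : (monomial d (coeff d h) : BPoly)
      = coeff d h • (X i * monomial (d - Finsupp.single i 1) 1) := by
    rw [X, monomial_mul, one_mul, hsplit, smul_monomial, smul_eq_mul, mul_one]
  rw [hmono]
  apply Submodule.smul_mem
  apply sp2
  apply isHomogeneous_monomial
  have hdd : (d - Finsupp.single i 1).degree = d.degree - 1 := by
    rw [degree2, degree2 d]
    have h0 := Finsupp.tsub_apply d (Finsupp.single i 1) 0
    have h1 := Finsupp.tsub_apply d (Finsupp.single i 1) 1
    fin_cases i <;> simp [Finsupp.single_apply] at h0 h1 hi ⊢ <;> omega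
  omega

end Stmt19Aux
namespace Stmt19Aux

lemma span_eq {n : ℕ} {Y Y' : Finset Pt} {ell : Pt → BPoly} {z : Pt}
    (hn : 1 ≤ n) (hY : Poised n Y) (hell : IsFundamental n Y ell)
    (hGC : ∀ y ∈ Y, ∃ s : Multiset BPoly, (∀ m ∈ s, totalDegree m = 1) ∧ ell y = s.prod)
    (hz : ∀ y ∈ Y, eval z (ell y) ≠ 0)
    (hY'sub : Y' ⊆ Y) (hY' : Poised (n - 1) Y') :
    Submodule.span ℝ (gcSet Y Y' z ell) = PiLE (n + 1) ⊓ vSub (Y : Set Pt) := by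
  have hspan_le : Submodule.span ℝ (gcSet Y Y' z ell) ≤ PiLE (n + 1) ⊓ vSub (Y : Set Pt) := by
    rw [Submodule.span_le]
    intro r hr
    exact gcSet_mem_W hell r hr
  apply le_antisymm hspan_le
  intro p hp
  have hhom : (homogeneousComponent (n + 1) p).IsHomogeneous (n + 1) :=
    homogeneousComponent_isHomogeneous _ _
  obtain ⟨q, hqspan, hqtop⟩ := top_mem_image hn hY hell hGC hz hY'sub hY' hhom
  have hqW := hspan_le hqspan
  have hdiff : p - q = 0 := by
    apply poised_zero hY
    · rw [mem_PiLE]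
      apply totalDegree_le_pred
      · have h1 := mem_PiLE.mp (Submodule.mem_inf.mp hp).1
        have h2 := mem_PiLE.mp (Submodule.mem_inf.mp hqW).1
        exact (totalDegree_sub _ _).trans (by omega)
      · rw [map_sub, hqtop, sub_self]
    · intro y hy
      have e1 := mem_vSub.mp (Submodule.mem_inf.mp hp).2 y (Finset.mem_coe.mpr hy)
      have e2 := mem_vSub.mp (Submodule.mem_inf.mp hqW).2 y (Finset.mem_coe.mpr hy)
      rw [map_sub, e1, e2, sub_zero]
  have : p = q := by
    have := sub_eq_zero.mp hdiff
    exact this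
  rw [this]
  exact hqspan

lemma exists_H {n : ℕ} {Y Y' : Finset Pt} {ell : Pt → BPoly} {z : Pt}
    (hspan : Submodule.span ℝ (gcSet Y Y' z ell) = PiLE (n + 1) ⊓ vSub (Y : Set Pt)) :
    ∃ H : Finset BPoly, (H : Set BPoly) ⊆ gcSet Y Y' z ell ∧
      Submodule.span ℝ (H : Set BPoly) = PiLE (n + 1) ⊓ vSub (Y : Set Pt) := by
  classical
  haveI : FiniteDimensional ℝ (PiLE (n + 1) : Submodule ℝ BPoly) := by
    unfold PiLE
    infer_instance
  haveI : FiniteDimensional ℝ (PiLE (n + 1) ⊓ vSub (Y : Set Pt) : Submodule ℝ BPoly) :=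
    Submodule.finiteDimensional_of_le inf_le_left
  have hfg : (PiLE (n + 1) ⊓ vSub (Y : Set Pt)).FG :=
    (Submodule.fg_iff_finiteDimensional _).mpr inferInstance
  obtain ⟨G, hG⟩ := hfg
  have hchoice : ∀ g ∈ G, ∃ T : Finset BPoly, (T : Set BPoly) ⊆ gcSet Y Y' z ell ∧
      g ∈ Submodule.span ℝ (T : Set BPoly) := by
    intro g hg
    have hgW : g ∈ Submodule.span ℝ (gcSet Y Y' z ell) := by
      rw [hspan, ← hG]
      exact Submodule.subset_span hg
    exact Submodule.mem_span_finite_of_mem_span hgW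
  choose T hT1 hT2 using hchoice
  refine ⟨G.attach.biUnion (fun g => T g.1 g.2), ?_, ?_⟩
  · rw [Finset.coe_biUnion]
    apply Set.iUnion₂_subset
    intro g _
    exact hT1 g.1 g.2
  · apply le_antisymm
    · rw [← hspan]
      apply Submodule.span_mono
      rw [Finset.coe_biUnion]
      apply Set.iUnion₂_subset
      intro g _
      exact hT1 g.1 g.2
    · rw [← hG]
      rw [Submodule.span_le]
      intro g hg
      have hgG : g ∈ G := hg
      have hsub : (T g hgG : Set BPoly) ⊆ (G.attach.biUnion (fun g => T g.1 g.2) : Finset BPoly) := by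
        intro x hx
        rw [Finset.mem_coe, Finset.mem_biUnion]
        exact ⟨⟨g, hgG⟩, Finset.mem_attach _ _, hx⟩
      exact Submodule.span_mono hsub (hT2 g hgG)

end Stmt19Aux
namespace Stmt19Aux

lemma hbasis_step {n : ℕ} {Y : Finset Pt} {H : Finset BPoly}
    (hHspan : Submodule.span ℝ (H : Set BPoly) = PiLE (n + 1) ⊓ vSub (Y : Set Pt))
    (htopmem : ∀ h : BPoly, h.IsHomogeneous (n + 1) →
      ∃ q, q ∈ PiLE (n + 1) ⊓ vSub (Y : Set Pt) ∧ homogeneousComponent (n + 1) q = h)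
    {f : BPoly} (hf : f ∈ vIdeal (Y : Set Pt)) (hfd : n + 1 ≤ f.totalDegree) :
    ∃ G : BPoly → BPoly, (∀ p ∈ H, (G p).totalDegree ≤ f.totalDegree - (n + 1)) ∧
      (f - ∑ p ∈ H, G p * p) ∈ vIdeal (Y : Set Pt) ∧
      (f - ∑ p ∈ H, G p * p).totalDegree + 1 ≤ f.totalDegree := by
  classical
  set D := f.totalDegree with hD
  set S := (homogeneousComponent D f).support with hS
  set ν : (Fin 2 →₀ ℕ) → (Fin 2 →₀ ℕ) := fun d =>
    Finsupp.single 0 (min (d 0) (n + 1)) + Finsupp.single 1 ((n + 1) - min (d 0) (n + 1))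
    with hν
  set μ : (Fin 2 →₀ ℕ) → (Fin 2 →₀ ℕ) := fun d => d - ν d with hμ
  have hdS : ∀ d ∈ S, d.degree = D := fun d hd =>
    homog_degree_eq (homogeneousComponent_isHomogeneous D f) hd
  have hν0 : ∀ d, ν d 0 = min (d 0) (n + 1) := by
    intro d; simp [hν, Finsupp.single_apply]
  have hν1 : ∀ d, ν d 1 = (n + 1) - min (d 0) (n + 1) := by
    intro d; simp [hν, Finsupp.single_apply]
  have hνdeg : ∀ d, (ν d).degree = n + 1 := by
    intro d; rw [degree2, hν0, hν1]; omega
  have hνle : ∀ d ∈ S, ν d ≤ d := by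
    intro d hd
    rw [Finsupp.le_def]
    have hdd := hdS d hd
    rw [degree2] at hdd
    intro j
    fin_cases j
    · show ν d 0 ≤ d 0
      rw [hν0]; omega
    · show ν d 1 ≤ d 1
      rw [hν1]; omega
  have hμν : ∀ d ∈ S, ν d + μ d = d := by
    intro d hd
    rw [hμ]
    exact add_tsub_cancel_of_le (hνle d hd)
  have hμdeg : ∀ d ∈ S, (μ d).degree = D - (n + 1) := by
    intro d hd
    have hdd := hdS d hd
    rw [degree2] at hdd
    have h0 := Finsupp.tsub_apply d (ν d) 0
    have h1 := Finsupp.tsub_apply d (ν d) 1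
    rw [hν0] at h0
    rw [hν1] at h1
    rw [hμ, degree2]
    simp only at h0 h1 ⊢
    rw [h0, h1]
    omega
  choose q hqW hqtop using fun d => htopmem (monomial (ν d) 1)
    (isHomogeneous_monomial _ (hνdeg d))
  have hqspan : ∀ d, q d ∈ Submodule.span ℝ (H : Set BPoly) := by
    intro d; rw [hHspan]; exact hqW d
  choose α _ hα using fun d => Submodule.mem_span_finset.mp (hqspan d)
  set G : BPoly → BPoly := fun p =>
    ∑ d ∈ S, (coeff d f * α d p) • (monomial (μ d) 1 : BPoly) with hG
  have hGdeg : ∀ p ∈ H, (G p).totalDegree ≤ D - (n + 1) := by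
    intro p _
    refine (totalDegree_finset_sum _ _).trans ?_
    apply Finset.sup_le
    intro d hd
    calc ((coeff d f * α d p) • (monomial (μ d) 1 : BPoly)).totalDegree
        ≤ (monomial (μ d) 1 : BPoly).totalDegree := totalDegree_smul_le _ _
      _ = (μ d).degree := by
          rw [totalDegree_monomial _ (one_ne_zero (α := ℝ))]
          exact dsum_eq _
      _ ≤ D - (n + 1) := le_of_eq (hμdeg d hd)
  have hswap : ∑ p ∈ H, G p * p = ∑ d ∈ S, (coeff d f) • ((monomial (μ d) 1 : BPoly) * q d) := by
    calc ∑ p ∈ H, G p * p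
        = ∑ p ∈ H, ∑ d ∈ S, ((coeff d f * α d p) • (monomial (μ d) 1 : BPoly)) * p := by
          apply Finset.sum_congr rfl
          intro p _
          rw [hG, Finset.sum_mul]
      _ = ∑ d ∈ S, ∑ p ∈ H, ((coeff d f * α d p) • (monomial (μ d) 1 : BPoly)) * p :=
          Finset.sum_comm
      _ = ∑ d ∈ S, (coeff d f) • ((monomial (μ d) 1 : BPoly) * q d) := by
          apply Finset.sum_congr rfl
          intro d _
          rw [← hα d, Finset.mul_sum, Finset.smul_sum]
          apply Finset.sum_congr rfl
          intro p _
          rw [smul_mul_assoc, mul_smul_comm, smul_smul]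
  have hHideal : ∀ p ∈ H, p ∈ vIdeal (Y : Set Pt) := by
    intro p hp
    have : p ∈ Submodule.span ℝ (H : Set BPoly) := Submodule.subset_span hp
    rw [hHspan] at this
    exact (Submodule.mem_inf.mp this).2
  have hFideal : (∑ p ∈ H, G p * p) ∈ vIdeal (Y : Set Pt) := by
    apply Ideal.sum_mem
    intro p hp
    exact Ideal.mul_mem_left _ _ (hHideal p hp)
  have hFdeg : (∑ p ∈ H, G p * p).totalDegree ≤ D := by
    rw [hswap]
    refine (totalDegree_finset_sum _ _).trans ?_
    apply Finset.sup_le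
    intro d hd
    refine (totalDegree_smul_le _ _).trans ?_
    refine (totalDegree_mul _ _).trans ?_
    have h1 : (monomial (μ d) 1 : BPoly).totalDegree = (μ d).degree := by
      rw [totalDegree_monomial _ (one_ne_zero (α := ℝ))]
      exact dsum_eq _
    have h2 : (q d).totalDegree ≤ n + 1 := mem_PiLE.mp (Submodule.mem_inf.mp (hqW d)).1
    rw [h1, hμdeg d hd]
    omega
  have hFtop : homogeneousComponent D (∑ p ∈ H, G p * p) = homogeneousComponent D f := by
    rw [hswap, map_sum]
    have hterm : ∀ d ∈ S, homogeneousComponent D ((coeff d f) • ((monomial (μ d) 1 : BPoly) * q d))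
        = monomial d (coeff d f) := by
      intro d hd
      rw [map_smul]
      have hmul := homogComp_mul (k := D - (n + 1)) (j := n + 1)
        (w := (monomial (μ d) 1 : BPoly))
        (isHomogeneous_monomial _ (hμdeg d hd))
        (mem_PiLE.mp (Submodule.mem_inf.mp (hqW d)).1)
      have hDD : D - (n + 1) + (n + 1) = D := by omega
      rw [hDD] at hmul
      rw [hmul, hqtop d, monomial_mul, one_mul]
      rw [show μ d + ν d = d from by rw [add_comm]; exact hμν d hd]
      rw [smul_monomial, smul_eq_mul, mul_one]
    rw [Finset.sum_congr rfl hterm]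
    conv_rhs => rw [as_sum (homogeneousComponent D f)]
    rw [← hS]
    apply Finset.sum_congr rfl
    intro d hd
    congr 1
    rw [coeff_homogeneousComponent, if_pos (hdS d hd)]
  refine ⟨G, hGdeg, ?_, ?_⟩
  · exact Submodule.sub_mem _ hf hFideal
  · have hsub : (f - ∑ p ∈ H, G p * p).totalDegree ≤ D := by
      refine (totalDegree_sub _ _).trans ?_
      rw [← hD]
      omega
    have h0 : homogeneousComponent D (f - ∑ p ∈ H, G p * p) = 0 := by
      rw [map_sub, hFtop, sub_self]
    have hD1 : D - 1 + 1 = D := by omega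
    rw [← hD1] at hsub h0
    have := totalDegree_le_pred hsub h0
    omega

end Stmt19Aux
namespace Stmt19Aux

lemma hbasis_all {n : ℕ} {Y : Finset Pt} {H : Finset BPoly}
    (hn : 1 ≤ n) (hY : Poised n Y)
    (hHspan : Submodule.span ℝ (H : Set BPoly) = PiLE (n + 1) ⊓ vSub (Y : Set Pt))
    (htopmem : ∀ h : BPoly, h.IsHomogeneous (n + 1) →
      ∃ q, q ∈ PiLE (n + 1) ⊓ vSub (Y : Set Pt) ∧ homogeneousComponent (n + 1) q = h) :
    ∀ f ∈ vIdeal (Y : Set Pt), ∃ g : BPoly → BPoly,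
      (∀ p ∈ H, (g p).totalDegree ≤ f.totalDegree - p.totalDegree) ∧
      f = ∑ p ∈ H, g p * p := by
  classical
  have hHdeg : ∀ p ∈ H, p.totalDegree ≤ n + 1 := by
    intro p hp
    have : p ∈ PiLE (n + 1) ⊓ vSub (Y : Set Pt) := by
      rw [← hHspan]; exact Submodule.subset_span hp
    exact mem_PiLE.mp (Submodule.mem_inf.mp this).1
  have hzero : ∀ f ∈ vIdeal (Y : Set Pt), f.totalDegree ≤ n →
      ∃ g : BPoly → BPoly, (∀ p ∈ H, (g p).totalDegree ≤ f.totalDegree - p.totalDegree) ∧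
        f = ∑ p ∈ H, g p * p := by
    intro f hf hfd
    have hf0 : f = 0 := poised_zero hY (mem_PiLE.mpr hfd) (fun y hy =>
      mem_vIdeal.mp hf y (Finset.mem_coe.mpr hy))
    refine ⟨fun _ => 0, ?_, ?_⟩
    · intro p _
      rw [totalDegree_zero]
      exact Nat.zero_le _
    · rw [hf0]
      simp
  suffices hind : ∀ dd : ℕ, ∀ f ∈ vIdeal (Y : Set Pt), f.totalDegree ≤ dd →
      ∃ g : BPoly → BPoly, (∀ p ∈ H, (g p).totalDegree ≤ f.totalDegree - p.totalDegree) ∧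
        f = ∑ p ∈ H, g p * p by
    intro f hf
    exact hind f.totalDegree f hf le_rfl
  intro dd
  induction dd with
  | zero =>
      intro f hf hfd
      exact hzero f hf (hfd.trans (by omega))
  | succ dd ih =>
      intro f hf hfd
      by_cases hsmall : f.totalDegree ≤ n
      · exact hzero f hf hsmall
      · push_neg at hsmall
        obtain ⟨G, hG1, hG2, hG3⟩ := hbasis_step hHspan htopmem hf hsmall
        obtain ⟨g', hg'1, hg'2⟩ := ih _ hG2 (by omega)
        refine ⟨fun p => g' p + G p, ?_, ?_⟩
        · intro p hp
          refine (totalDegree_add _ _).trans ?_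
          have b1 := hg'1 p hp
          have b2 := hG1 p hp
          have b3 := hHdeg p hp
          apply max_le <;> omega
        · calc f = (f - ∑ p ∈ H, G p * p) + ∑ p ∈ H, G p * p := by ring
            _ = (∑ p ∈ H, g' p * p) + ∑ p ∈ H, G p * p := by rw [← hg'2]
            _ = ∑ p ∈ H, (g' p + G p) * p := by
                rw [← Finset.sum_add_distrib]
                apply Finset.sum_congr rfl
                intro p _
                ring

end Stmt19Aux
/-- For a `GC_n` set `Y_n` (all fundamental polynomials are
products of linear factors), a point `z` with `ℓ_{y,Y_n}(z) ≠ 0` for all `y`,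
and any `Π_{n-1}`-poised subset `Y_{n-1} ⊆ Y_n` with `T = Y_n \ Y_{n-1}`, the
set `∪_{t∈T} {m·ℓ_{t,Y_n} : m ∈ L, m(t) = 0}` spans `Π_{n+1} ∩ I(Y_n)` and
contains an H-basis of `I(Y_n)` whose elements are products of linear
polynomials. -/
theorem stmt19 (n : ℕ) (hn : 1 ≤ n) (Y : Finset Pt) (hY : Poised n Y)
    (ell : Pt → BPoly) (hell : IsFundamental n Y ell)
    (hGC : ∀ y ∈ Y, ∃ s : Multiset BPoly,
      (∀ m ∈ s, totalDegree m = 1) ∧ ell y = s.prod)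
    (z : Pt) (hz : ∀ y ∈ Y, eval z (ell y) ≠ 0)
    (Y' : Finset Pt) (hY'sub : Y' ⊆ Y) (hY' : Poised (n - 1) Y') :
    Submodule.span ℝ (gcSet Y Y' z ell) = PiLE (n + 1) ⊓ vSub (Y : Set Pt) ∧
    ∃ H : Finset BPoly, (H : Set BPoly) ⊆ gcSet Y Y' z ell ∧
      IsHBasisSet (vIdeal (Y : Set Pt)) H ∧
      ∀ p ∈ H, ∃ s : Multiset BPoly,
        (∀ m ∈ s, totalDegree m = 1) ∧ p = s.prod := by
  have hspan := Stmt19Aux.span_eq hn hY hell hGC hz hY'sub hY'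
  refine ⟨hspan, ?_⟩
  have htopmem : ∀ h : BPoly, h.IsHomogeneous (n + 1) →
      ∃ q, q ∈ PiLE (n + 1) ⊓ vSub (Y : Set Pt) ∧ homogeneousComponent (n + 1) q = h := by
    intro h hh
    obtain ⟨q, hq1, hq2⟩ := Stmt19Aux.top_mem_image hn hY hell hGC hz hY'sub hY' hh
    refine ⟨q, ?_, hq2⟩
    rw [← hspan]
    exact hq1
  obtain ⟨H, hHsub, hHspan⟩ := Stmt19Aux.exists_H hspan
  refine ⟨H, hHsub, ⟨?_, ?_⟩, ?_⟩
  · intro p hp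
    exact Stmt19Aux.mem_vIdeal.mpr (Stmt19Aux.mem_vSub.mp
      (Submodule.mem_inf.mp (Stmt19Aux.gcSet_mem_W hell p (hHsub hp))).2)
  · exact Stmt19Aux.hbasis_all hn hY hHspan htopmem
  · intro p hp
    obtain ⟨t, ht, m, hm1, hmz, hmdvd, hmt, rfl⟩ := hHsub hp
    obtain ⟨s, hs1, hs2⟩ := hGC t (Finset.mem_sdiff.mp ht).1
    refine ⟨m ::ₘ s, ?_, ?_⟩
    · intro m' hm'
      rcases Multiset.mem_cons.mp hm' with h | h
      · rw [h]; exact hm1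
      · exact hs1 m' h
    · rw [Multiset.prod_cons, hs2]
end
end
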